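/- arXiv:1512.07603 — 7 statements merged into one kernel-verified Lean document; each statement's English description precedes it below -/
import Mathlib

section
/- Let n ≥ 2 and let x_1, …, x_n be real numbers with mean x̄ = (1/n)·Σ_i x_i and population standard deviation s = √((1/n)·Σ_i (x_i − x̄)²). Then for every index j, x_j ≤ x̄ + √(n−1)·s (Samuelson's inequality). -/
open Finset

/-- Samuelson's inequality: every value is at most the mean plus √(n−1) times the
population standard deviation. -/
theorem samuelson_inequality (n : ℕ) (hn : 2 ≤ n) (x : Fin n → ℝ)
    (xbar s : ℝ)
    (hxbar : xbar = (∑ i, x i) / n)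
    (hs : s = Real.sqrt ((∑ i, (x i - xbar) ^ 2) / n)) :
    ∀ j, x j ≤ xbar + Real.sqrt (n - 1) * s := by
  intro j
  have hn0 : (0:ℝ) < n := by positivity
  set d : Fin n → ℝ := fun i => x i - xbar with hd
  have hsumd : ∑ i, d i = 0 := by
    simp only [hd, Finset.sum_sub_distrib, Finset.sum_const, Finset.card_univ,
      Fintype.card_fin, nsmul_eq_mul, hxbar]
    field_simp
    ring
  set S : ℝ := ∑ i, d i ^ 2 with hS
  have hS0 : 0 ≤ S := Finset.sum_nonneg fun i _ => sq_nonneg _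
  have herase_sum : ∑ i ∈ univ.erase j, d i = - d j := by
    have h := Finset.sum_erase_add univ d (Finset.mem_univ j)
    rw [hsumd] at h
    linarith
  have herase_sq : ∑ i ∈ univ.erase j, d i ^ 2 = S - d j ^ 2 := by
    have h := Finset.sum_erase_add univ (fun i => d i ^ 2) (Finset.mem_univ j)
    linarith [h]
  have hcs2 : (∑ i ∈ univ.erase j, (1:ℝ) * d i) ^ 2 ≤
      (∑ i ∈ univ.erase j, (1:ℝ)^2) * ∑ i ∈ univ.erase j, d i ^ 2 :=
    Finset.sum_mul_sq_le_sq_mul_sq _ _ _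
  have hcard : (univ.erase j).card = n - 1 := by
    simp [Finset.card_erase_of_mem]
  have hone : ∑ i ∈ univ.erase j, (1:ℝ)^2 = (n:ℝ) - 1 := by
    rw [Finset.sum_const, hcard]
    have : (1:ℕ) ≤ n := le_trans (by norm_num) hn
    push_cast [this]
    ring_nf
    push_cast [Nat.cast_sub this]
    ring
  have key : d j ^ 2 ≤ ((n:ℝ) - 1) * (S - d j ^ 2) := by
    have h1 : (∑ i ∈ univ.erase j, (1:ℝ) * d i) = - d j := by
      simpa using herase_sum
    rw [h1, hone, herase_sq] at hcs2
    simpa using hcs2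
  have hdj2 : d j ^ 2 ≤ ((n:ℝ) - 1) * (S / n) := by
    have h1 : (n:ℝ) * d j ^ 2 ≤ ((n:ℝ) - 1) * S := by nlinarith
    rw [mul_div_assoc'] at *
    rw [le_div_iff₀ hn0]
    nlinarith
  have hdj : d j ≤ Real.sqrt ((n:ℝ) - 1) * s := by
    have h2 : d j ≤ Real.sqrt (d j ^ 2) := by
      rw [Real.sqrt_sq_eq_abs]; exact le_abs_self _
    calc d j ≤ Real.sqrt (d j ^ 2) := h2
      _ ≤ Real.sqrt (((n:ℝ) - 1) * (S / n)) := Real.sqrt_le_sqrt hdj2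
      _ = Real.sqrt ((n:ℝ) - 1) * Real.sqrt (S / n) := Real.sqrt_mul (by
          have : (2:ℝ) ≤ n := by exact_mod_cast hn
          linarith) _
      _ = Real.sqrt ((n:ℝ) - 1) * s := by rw [hs]
  have : x j - xbar ≤ Real.sqrt ((n:ℝ) - 1) * s := hdj
  linarith
end

section
/- Let n ≥ 2 and let x_1, …, x_n be real numbers with mean x̄ = (1/n)·Σ_i x_i and population standard deviation s = √((1/n)·Σ_i (x_i − x̄)²). Then there exists an index j with x_j ≥ x̄ + s/√(n−1) (Brunk's lower bound for the maximum). -/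
open Finset

/-- Brunk's lower bound for the maximum: some value is at least the mean plus
the population standard deviation divided by √(n−1). -/
theorem brunk_lower_bound (n : ℕ) (hn : 2 ≤ n) (x : Fin n → ℝ)
    (xbar s : ℝ)
    (hxbar : xbar = (∑ i, x i) / n)
    (hs : s = Real.sqrt ((∑ i, (x i - xbar) ^ 2) / n)) :
    ∃ j, x j ≥ xbar + s / Real.sqrt (n - 1) := by
  have hnR : (2:ℝ) ≤ n := by exact_mod_cast hn
  have hn0 : (0:ℝ) < n := by linarith
  have hn1 : (0:ℝ) < (n:ℝ) - 1 := by linarith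
  set d : Fin n → ℝ := fun i => x i - xbar with hd
  have hne : (univ : Finset (Fin n)).Nonempty := ⟨⟨0, by omega⟩, mem_univ _⟩
  have hsum : ∑ i, d i = 0 := by
    have h1 : ∑ i, d i = (∑ i, x i) - n * xbar := by
      simp [hd, Finset.sum_sub_distrib, mul_comm]
    rw [h1, hxbar]
    field_simp
    ring
  set D : ℝ := univ.sup' hne d with hDdef
  have hDle : ∀ i, d i ≤ D := fun i => le_sup' d (mem_univ i)
  have hD0 : 0 ≤ D := by
    by_contra h
    push_neg at h
    have h2 : ∑ i, d i < ∑ _i : Fin n, (0:ℝ) :=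
      Finset.sum_lt_sum_of_nonempty hne (fun i _ => lt_of_le_of_lt (hDle i) h)
    simp [hsum] at h2
  obtain ⟨i0, hi0⟩ : ∃ i0, d i0 ≤ 0 := by
    by_contra h
    push_neg at h
    have h2 : ∑ _i : Fin n, (0:ℝ) < ∑ i, d i :=
      Finset.sum_lt_sum_of_nonempty hne (fun i _ => h i)
    simp [hsum] at h2
  set P : ℝ := ∑ i, max (d i) 0 with hPdef
  set Q : ℝ := ∑ i, max (-(d i)) 0 with hQdef
  have hP0 : 0 ≤ P := Finset.sum_nonneg fun i _ => le_max_right _ _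
  have hQP : Q = P := by
    have : P - Q = ∑ i, d i := by
      rw [hPdef, hQdef, ← Finset.sum_sub_distrib]
      exact Finset.sum_congr rfl fun i _ => by
        rcases le_or_gt (d i) 0 with h | h
        · rw [max_eq_right h, max_eq_left (by linarith)]; ring
        · rw [max_eq_left h.le, max_eq_right (by linarith)]; ring
    have := this.trans hsum
    linarith
  have hPle : P ≤ ((n:ℝ) - 1) * D := by
    have h1 : P = ∑ i ∈ univ.erase i0, max (d i) 0 :=
      (Finset.sum_erase (f := fun i => max (d i) 0) univ (max_eq_right hi0)).symm
    have h2 : ∑ i ∈ univ.erase i0, max (d i) 0 ≤ (univ.erase i0).card • D :=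
      Finset.sum_le_card_nsmul _ _ D (fun i _ => max_le (hDle i) hD0)
    have hcard : (univ.erase i0).card = n - 1 := by
      rw [Finset.card_erase_of_mem (mem_univ _)]; simp
    calc P = ∑ i ∈ univ.erase i0, max (d i) 0 := h1
      _ ≤ (univ.erase i0).card • D := h2
      _ = ((n:ℝ) - 1) * D := by
          rw [nsmul_eq_mul, hcard, Nat.cast_sub (by omega)]; norm_num
  have hpos : ∑ i, (max (d i) 0) ^ 2 ≤ D * P := by
    rw [hPdef, Finset.mul_sum]
    refine Finset.sum_le_sum fun i _ => ?_
    have h1 : max (d i) 0 ≤ D := max_le (hDle i) hD0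
    have h2 : 0 ≤ max (d i) 0 := le_max_right _ _
    nlinarith
  have hneg : ∑ i, (max (-(d i)) 0) ^ 2 ≤ Q * Q := by
    have h1 : ∀ i : Fin n, max (-(d i)) 0 ≤ Q := fun i => by
      rw [hQdef]
      exact Finset.single_le_sum (f := fun j => max (-(d j)) 0)
        (fun j _ => le_max_right _ _) (mem_univ i)
    calc ∑ i, (max (-(d i)) 0) ^ 2 ≤ ∑ i, (max (-(d i)) 0) * Q := by
          refine Finset.sum_le_sum fun i _ => ?_
          nlinarith [h1 i, le_max_right (-(d i)) (0:ℝ)]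
      _ = Q * Q := by rw [← Finset.sum_mul, ← hQdef]
  have hsplit : ∑ i, d i ^ 2 = ∑ i, (max (d i) 0) ^ 2 + ∑ i, (max (-(d i)) 0) ^ 2 := by
    rw [← Finset.sum_add_distrib]
    refine Finset.sum_congr rfl fun i _ => ?_
    rcases le_or_gt (d i) 0 with h | h
    · rw [max_eq_right h, max_eq_left (by linarith)]; ring
    · rw [max_eq_left h.le, max_eq_right (by linarith)]; ring
  have hkey : ∑ i, d i ^ 2 ≤ (n:ℝ) * ((n:ℝ) - 1) * D ^ 2 := by
    rw [hsplit]
    have := hneg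
    rw [hQP] at this
    nlinarith [hpos, this, hPle, hP0, hD0, hn1]
  -- now bound s
  have hsle : s ≤ Real.sqrt ((n:ℝ) - 1) * D := by
    rw [hs]
    have h1 : (∑ i, (x i - xbar) ^ 2) / n ≤ ((n:ℝ) - 1) * D ^ 2 := by
      rw [div_le_iff₀ hn0]
      calc ∑ i, (x i - xbar) ^ 2 = ∑ i, d i ^ 2 := rfl
        _ ≤ (n:ℝ) * ((n:ℝ) - 1) * D ^ 2 := hkey
        _ = ((n:ℝ) - 1) * D ^ 2 * n := by ring
    calc Real.sqrt ((∑ i, (x i - xbar) ^ 2) / n)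
        ≤ Real.sqrt (((n:ℝ) - 1) * D ^ 2) := Real.sqrt_le_sqrt h1
      _ = Real.sqrt ((n:ℝ) - 1) * D := by
          rw [Real.sqrt_mul hn1.le, Real.sqrt_sq hD0]
  obtain ⟨j, _, hj⟩ := Finset.exists_mem_eq_sup' hne d
  refine ⟨j, ?_⟩
  have hsq1 : (0:ℝ) < Real.sqrt ((n:ℝ) - 1) := Real.sqrt_pos.mpr hn1
  have : s / Real.sqrt ((n:ℝ) - 1) ≤ D := by
    rw [div_le_iff₀ hsq1]
    linarith [hsle, mul_comm D (Real.sqrt ((n:ℝ) - 1))]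
  have hxj : x j = xbar + d j := by simp [hd]
  rw [hxj, ← hj] at *
  linarith
end

section
/- Let B be a real n×n matrix (n ≥ 2) with entries b_ij and eigenvalue multiset Λ over ℂ. Then every eigenvalue λ₀ ∈ Λ satisfies Re(λ₀) ≤ (1/n)·tr(B) + (√(n−1)/√n)·√(F_diag + χ_off + h), where F_diag = ((n−1)/n)·Σ_i b_ii² − (2/n)·Σ_{i<j} b_ii·b_jj, χ_off = 2·Σ_{i<j} b_ij·b_ji, and h = Σ_{λ∈Λ} (Im λ)². -/
open Finset Matrix Polynomial Equiv

lemma ms_cs (t : Multiset ℝ) :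
    t.sum ^ 2 ≤ (Multiset.card t : ℝ) * (t.map (fun x => x ^ 2)).sum := by
  induction t using Multiset.induction with
  | empty => simp
  | cons a t ih =>
    have hQ : 0 ≤ ((t.map (fun x => x ^ 2)).sum : ℝ) := by
      apply Multiset.sum_nonneg
      intro x hx
      obtain ⟨y, _, rfl⟩ := Multiset.mem_map.mp hx
      positivity
    rcases Multiset.empty_or_exists_mem t with rfl | ⟨x, hx⟩
    · simp only [Multiset.sum_zero, Multiset.card_zero, Multiset.map_zero,
        Multiset.sum_cons, Multiset.map_cons, Multiset.card_cons]
      push_cast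
      nlinarith [sq_nonneg a]
    · have hk1 : (1:ℝ) ≤ (Multiset.card t : ℝ) := by
        have := Multiset.card_pos_iff_exists_mem.mpr ⟨x, hx⟩
        exact_mod_cast this
      have hkpos : (0:ℝ) < (Multiset.card t : ℝ) := lt_of_lt_of_le one_pos hk1
      have h2 : (Multiset.card t : ℝ) * (2 * a * t.sum)
          ≤ (Multiset.card t : ℝ) * ((Multiset.card t : ℝ) * a ^ 2
            + (t.map (fun x => x ^ 2)).sum) := by
        nlinarith [sq_nonneg ((Multiset.card t : ℝ) * a - t.sum), ih]
      have h2' := (mul_le_mul_iff_right₀ hkpos).mp h2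
      simp only [Multiset.sum_cons, Multiset.map_cons, Multiset.card_cons]
      push_cast
      nlinarith [ih, h2']

lemma esymm_two_cons {R : Type*} [CommRing R] (a : R) (t : Multiset R) :
    (a ::ₘ t).esymm 2 = a * t.sum + t.esymm 2 := by
  rw [Multiset.esymm, show (2:ℕ) = 1 + 1 from rfl, Multiset.powersetCard_cons,
    Multiset.map_add, Multiset.sum_add, Multiset.map_map]
  rw [add_comm]
  congr 1
  · rw [Multiset.powersetCard_one, Multiset.map_map]
    have h1 : ((Multiset.prod ∘ Multiset.cons a) ∘ singleton : R → R)
        = fun x : R => a * x := by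
      funext x; simp
    rw [h1]
    have := Multiset.sum_map_mul_left (s := t) (a := a) (f := fun x => x)
    simpa using this

lemma esymm_two_eq {R : Type*} [CommRing R] (t : Multiset R) :
    2 * t.esymm 2 = t.sum ^ 2 - (t.map (fun x => x ^ 2)).sum := by
  induction t using Multiset.induction with
  | empty => simp [Multiset.esymm, Multiset.powersetCard_zero_right 1]
  | cons a t ih =>
    rw [esymm_two_cons]
    simp only [Multiset.sum_cons, Multiset.map_cons]
    linear_combination ih

lemma coeff_vanish_big_support {n : ℕ} (M : Matrix (Fin n) (Fin n) ℂ)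
    (σ : Perm (Fin n)) (h1 : σ ≠ 1) (h2 : ¬ σ.IsSwap) :
    (∏ i, charmatrix M (σ i) i).coeff (n - 2) = 0 := by
  apply Polynomial.coeff_eq_zero_of_natDegree_lt
  have hb : (∏ i, charmatrix M (σ i) i).natDegree
      ≤ ∑ i : Fin n, if σ i = i then 1 else 0 := by
    refine le_trans (Polynomial.natDegree_prod_le univ _) (Finset.sum_le_sum fun i _ => ?_)
    simpa using charmatrix_apply_natDegree_le (M := M) (σ i) i
  have hsum : (∑ i : Fin n, if σ i = i then 1 else 0) = n - σ.support.card := by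
    have h' := Finset.card_filter_add_card_filter_not
      (s := (univ : Finset (Fin n))) (p := fun i => σ i = i)
    have hsupp : (univ : Finset (Fin n)).filter (fun i => ¬ σ i = i) = σ.support := by
      ext i; simp [Equiv.Perm.mem_support]
    rw [hsupp] at h'
    have hcount : (∑ i : Fin n, if σ i = i then 1 else 0)
        = #((univ : Finset (Fin n)).filter (fun i => σ i = i)) := by
      simp [Finset.sum_boole]
    simp only [Finset.card_univ, Fintype.card_fin] at h'
    omega
  have hsupp3 : 3 ≤ σ.support.card := by
    have hc0 : σ.support.card ≠ 0 := fun H => h1 (Equiv.Perm.card_support_eq_zero.mp H)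
    have hc1 : σ.support.card ≠ 1 := Equiv.Perm.card_support_ne_one σ
    have hc2 : σ.support.card ≠ 2 := fun H => h2 (Equiv.Perm.card_support_eq_two.mp H)
    omega
  have hcle : σ.support.card ≤ n := by
    simpa using Finset.card_le_card (Finset.subset_univ σ.support)
  omega

lemma swap_prod_coeff {n : ℕ} (M : Matrix (Fin n) (Fin n) ℂ) (a b : Fin n) (hab : a ≠ b) :
    (∏ i, charmatrix M (Equiv.swap a b i) i).coeff (n - 2) = M a b * M b a := by
  have hsub : ({a, b} : Finset (Fin n)) ⊆ univ := Finset.subset_univ _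
  rw [← Finset.prod_sdiff hsub]
  have hpair : (∏ i ∈ ({a, b} : Finset (Fin n)), charmatrix M (Equiv.swap a b i) i)
      = Polynomial.C (M a b * M b a) := by
    rw [Finset.prod_pair hab, Equiv.swap_apply_left, Equiv.swap_apply_right,
      charmatrix_apply_ne _ _ _ (Ne.symm hab), charmatrix_apply_ne _ _ _ hab,
      neg_mul_neg, ← Polynomial.C_mul, mul_comm (M b a) (M a b)]
  have hrest : (∏ i ∈ univ \ ({a, b} : Finset (Fin n)), charmatrix M (Equiv.swap a b i) i)
      = ∏ i ∈ univ \ ({a, b} : Finset (Fin n)), (Polynomial.X - Polynomial.C (M i i)) := by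
    refine Finset.prod_congr rfl fun i hi => ?_
    rw [Finset.mem_sdiff, Finset.mem_insert, Finset.mem_singleton] at hi
    push_neg at hi
    rw [Equiv.swap_apply_of_ne_of_ne hi.2.1 hi.2.2, charmatrix_apply_eq]
  rw [hpair, hrest]
  set q : Polynomial ℂ := ∏ i ∈ univ \ ({a, b} : Finset (Fin n)), (Polynomial.X - Polynomial.C (M i i)) with hq
  have hqm : q.Monic := Polynomial.monic_prod_of_monic _ _ fun i _ => Polynomial.monic_X_sub_C _
  have hqd : q.natDegree = n - 2 := by
    rw [hq, Polynomial.natDegree_prod_of_monic _ _ fun i _ => Polynomial.monic_X_sub_C _]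
    simp only [Polynomial.natDegree_X_sub_C, Finset.sum_const, smul_eq_mul, mul_one]
    rw [Finset.card_sdiff_of_subset hsub, Finset.card_univ, Fintype.card_fin, Finset.card_pair hab]
  rw [Polynomial.coeff_mul_C, ← hqd, hqm.coeff_natDegree, one_mul]

-- identity permutation contribution
lemma diag_prod_coeff {n : ℕ} (hn : 2 ≤ n) (f : Fin n → ℂ) :
    (∏ i, (Polynomial.X - Polynomial.C (f i))).coeff (n - 2)
      = (Finset.univ.val.map f).esymm 2 := by
  have h1 : (∏ i, (Polynomial.X - Polynomial.C (f i)))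
      = ((Finset.univ.val.map f).map fun t => Polynomial.X - Polynomial.C t).prod := by
    rw [Finset.prod, Multiset.map_map]
    rfl
  have hcard : Multiset.card (Finset.univ.val.map f) = n := by simp
  have hk : n - 2 ≤ Multiset.card (Finset.univ.val.map f) := by omega
  rw [h1, Multiset.prod_X_sub_C_coeff _ hk, hcard]
  have : n - (n - 2) = 2 := by omega
  rw [this]
  simp

-- pairs square identity
lemma pairs_sq {R : Type*} [CommRing R] {n : ℕ} (f : Fin n → R) :
    (∑ i, f i) ^ 2 = ∑ i, (f i) ^ 2
      + 2 * ∑ i, ∑ j ∈ Finset.univ.filter (fun j => i < j), f i * f j := by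
  have h1 : (∑ i, f i) ^ 2 = ∑ i : Fin n, ∑ j : Fin n, f i * f j := by
    rw [sq, Finset.sum_mul_sum]
  have key : ∀ i j : Fin n, f i * f j
      = (if i < j then f i * f j else 0) + (if j < i then f i * f j else 0)
        + (if i = j then f i * f j else 0) := by
    intro i j
    rcases lt_trichotomy i j with h | h | h
    · simp [h, not_lt_of_gt h, ne_of_lt h, asymm h]
    · simp [h, lt_irrefl]
    · simp [h, not_lt_of_gt h, (ne_of_lt h).symm, asymm h]
  rw [h1]
  have h2 : ∀ i : Fin n, ∑ j : Fin n, f i * f j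
      = (∑ j : Fin n, if i < j then f i * f j else 0)
        + (∑ j : Fin n, if j < i then f i * f j else 0)
        + (∑ j : Fin n, if i = j then f i * f j else 0) := by
    intro i
    rw [← Finset.sum_add_distrib, ← Finset.sum_add_distrib]
    exact Finset.sum_congr rfl fun j _ => key i j
  rw [Finset.sum_congr rfl fun i _ => h2 i, Finset.sum_add_distrib, Finset.sum_add_distrib]
  have h3 : (∑ i : Fin n, ∑ j : Fin n, if i = j then f i * f j else 0) = ∑ i, (f i) ^ 2 := by
    refine Finset.sum_congr rfl fun i _ => ?_
    rw [Finset.sum_ite_eq (Finset.univ) i (fun j => f i * f j)]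
    simp [sq]
  have h4 : (∑ i : Fin n, ∑ j : Fin n, if j < i then f i * f j else 0)
      = ∑ i : Fin n, ∑ j : Fin n, if i < j then f i * f j else 0 := by
    rw [Finset.sum_comm]
    refine Finset.sum_congr rfl fun i _ => Finset.sum_congr rfl fun j _ => ?_
    rcases eq_or_ne i j with rfl | hne
    · simp
    · by_cases hij : i < j <;> simp [hij, mul_comm]
  have h5 : (∑ i : Fin n, ∑ j : Fin n, if i < j then f i * f j else 0)
      = ∑ i, ∑ j ∈ Finset.univ.filter (fun j => i < j), f i * f j := by
    refine Finset.sum_congr rfl fun i _ => ?_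
    rw [Finset.sum_filter]
  rw [h3, h4, h5]
  ring

lemma charpoly_coeff_sub_two {n : ℕ} (hn : 2 ≤ n) (M : Matrix (Fin n) (Fin n) ℂ) :
    M.charpoly.coeff (n - 2)
      = (Finset.univ.val.map fun i => M i i).esymm 2
        - ∑ i, ∑ j ∈ Finset.univ.filter (fun j => i < j), M i j * M j i := by
  classical
  rw [Matrix.charpoly, Matrix.det_apply', Polynomial.finset_sum_coeff]
  simp only [Polynomial.coeff_intCast_mul]
  set g : Perm (Fin n) → ℂ :=
    fun σ => ((Equiv.Perm.sign σ : ℤ) : ℂ) * (∏ i, charmatrix M (σ i) i).coeff (n - 2) with hg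
  show ∑ σ : Perm (Fin n), g σ = _
  have hsplit : ∑ σ : Perm (Fin n), g σ
      = (∑ σ ∈ univ.filter (fun σ : Perm (Fin n) => σ = 1 ∨ σ.IsSwap), g σ)
        + ∑ σ ∈ univ.filter (fun σ : Perm (Fin n) => ¬ (σ = 1 ∨ σ.IsSwap)), g σ :=
    (Finset.sum_filter_add_sum_filter_not _ _ _).symm
  have hzero : ∑ σ ∈ univ.filter (fun σ : Perm (Fin n) => ¬ (σ = 1 ∨ σ.IsSwap)), g σ = 0 := by
    refine Finset.sum_eq_zero fun σ hσ => ?_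
    rw [Finset.mem_filter] at hσ
    push_neg at hσ
    rw [hg]
    simp [coeff_vanish_big_support M σ hσ.2.1 hσ.2.2]
  have hfilter : univ.filter (fun σ : Perm (Fin n) => σ = 1 ∨ σ.IsSwap)
      = insert 1 (univ.filter Equiv.Perm.IsSwap) := by
    ext σ
    simp [or_comm, eq_comm]
  have h1notswap : (1 : Perm (Fin n)) ∉ univ.filter Equiv.Perm.IsSwap := by
    simp only [Finset.mem_filter, Finset.mem_univ, true_and]
    rintro ⟨a, b, hab, hs⟩
    have hba : b = a := by simpa using congrArg (fun e : Perm (Fin n) => e a) hs.symm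
    exact hab hba.symm
  have hone : g 1 = (Finset.univ.val.map fun i => M i i).esymm 2 := by
    rw [hg]
    simp only [Equiv.Perm.sign_one, Equiv.Perm.one_apply, charmatrix_apply_eq]
    rw [diag_prod_coeff hn]
    simp
  have hswap : ∑ σ ∈ univ.filter Equiv.Perm.IsSwap, g σ
      = - ∑ i, ∑ j ∈ Finset.univ.filter (fun j => i < j), M i j * M j i := by
    have hpairsum : ∑ i, ∑ j ∈ Finset.univ.filter (fun j => i < j), M i j * M j i
        = ∑ p ∈ (univ ×ˢ univ).filter (fun p : Fin n × Fin n => p.1 < p.2),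
            M p.1 p.2 * M p.2 p.1 := by
      rw [Finset.sum_filter, Finset.sum_product]
      exact Finset.sum_congr rfl fun i _ => by rw [Finset.sum_filter]
    rw [hpairsum, ← Finset.sum_neg_distrib]
    refine (Finset.sum_bij (fun (p : Fin n × Fin n) (_ : p ∈ (univ ×ˢ univ).filter (fun p : Fin n × Fin n => p.1 < p.2)) => Equiv.swap p.1 p.2) ?_ ?_ ?_ ?_).symm
    · rintro ⟨a, b⟩ hp
      rw [Finset.mem_filter] at hp
      exact Finset.mem_filter.mpr ⟨Finset.mem_univ _, ⟨a, b, ne_of_lt hp.2, rfl⟩⟩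
    · rintro ⟨a, b⟩ hab ⟨c, d⟩ hcd heq
      rw [Finset.mem_filter] at hab hcd
      have hab' := hab.2; have hcd' := hcd.2
      simp only at hab' hcd' heq
      have h1 := congrArg (fun e : Perm (Fin n) => e a) heq
      simp only [Equiv.swap_apply_left] at h1
      rcases eq_or_ne a c with rfl | hac
      · rw [Equiv.swap_apply_left] at h1
        simp [h1]
      · rcases eq_or_ne a d with rfl | had
        · rw [Equiv.swap_apply_right] at h1
          exact absurd (lt_trans (h1 ▸ hab') hcd') (lt_irrefl a)
        · rw [Equiv.swap_apply_of_ne_of_ne hac had] at h1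
          exact absurd (h1 ▸ hab') (lt_irrefl a)
    · intro σ hσ
      rw [Finset.mem_filter] at hσ
      obtain ⟨a, b, hab, rfl⟩ := hσ.2
      rcases lt_or_gt_of_ne hab with hlt | hgt
      · exact ⟨(a, b), Finset.mem_filter.mpr ⟨Finset.mem_product.mpr ⟨mem_univ _, mem_univ _⟩, hlt⟩, rfl⟩
      · exact ⟨(b, a), Finset.mem_filter.mpr ⟨Finset.mem_product.mpr ⟨mem_univ _, mem_univ _⟩, hgt⟩,
          Equiv.swap_comm a b ▸ rfl⟩
    · rintro ⟨a, b⟩ hp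
      rw [Finset.mem_filter] at hp
      have hab : a ≠ b := ne_of_lt hp.2
      rw [hg]
      simp only
      rw [swap_prod_coeff M a b hab, Equiv.Perm.sign_swap hab]
      push_cast
      ring
  rw [hsplit, hzero, add_zero, hfilter, Finset.sum_insert h1notswap, hone, hswap]
  ring

/-- Upper eigenvalue bound: every eigenvalue of a real matrix `B` has real part at most
`tr(B)/n + (√(n−1)/√n)·√(F_diag + χ_off + h)`. -/
theorem eigenvalue_re_upper_bound (n : ℕ) (hn : 2 ≤ n) (B : Matrix (Fin n) (Fin n) ℝ)
    (Λ : Multiset ℂ)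
    (hΛ : Λ = (Matrix.charpoly (B.map (Complex.ofReal ·))).roots)
    (Fdiag χoff h : ℝ)
    (hF : Fdiag = ((n - 1 : ℝ) / n) * ∑ i, (B i i) ^ 2
        - (2 / (n : ℝ)) * ∑ i, ∑ j ∈ Finset.univ.filter (fun j => i < j), B i i * B j j)
    (hχ : χoff = 2 * ∑ i, ∑ j ∈ Finset.univ.filter (fun j => i < j), B i j * B j i)
    (hh : h = (Λ.map (fun lam => lam.im ^ 2)).sum) :
    ∀ lam0 ∈ Λ, lam0.re ≤ Matrix.trace B / n
      + (Real.sqrt (n - 1) / Real.sqrt n) * Real.sqrt (Fdiag + χoff + h) := by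
  intro lam0 hmem
  classical
  haveI : Nonempty (Fin n) := ⟨⟨0, by omega⟩⟩
  set A : Matrix (Fin n) (Fin n) ℂ := B.map (Complex.ofReal ·) with hA
  -- real quantities
  set S : ℝ := Matrix.trace B with hS
  have hStr : S = ∑ i, B i i := by
    simp [hS, Matrix.trace, Matrix.diag]
  set P2 : ℝ := ∑ i, ∑ j ∈ Finset.univ.filter (fun j => i < j), B i i * B j j with hP2
  set O2 : ℝ := ∑ i, ∑ j ∈ Finset.univ.filter (fun j => i < j), B i j * B j i with hO2
  -- basic charpoly facts
  have hdeg : A.charpoly.natDegree = n := by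
    rw [Matrix.charpoly_natDegree_eq_dim, Fintype.card_fin]
  have hsplits : A.charpoly.Splits := IsAlgClosed.splits _
  have hcardΛ : Multiset.card Λ = n := by
    rw [hΛ, Polynomial.splits_iff_card_roots.mp hsplits, hdeg]
  -- sum of roots
  have hΛsum : Λ.sum = ((S : ℝ) : ℂ) := by
    rw [hΛ, ← Matrix.trace_eq_sum_roots_charpoly]
    rw [hStr]
    simp [hA, Matrix.trace, Matrix.diag, Matrix.map_apply]
  -- esymm 2 of roots
  have hesymm : Λ.esymm 2 = A.charpoly.coeff (n - 2) := by
    have h2n : n - 2 ≤ A.charpoly.natDegree := by omega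
    rw [Polynomial.coeff_eq_esymm_roots_of_card
      (by rw [Polynomial.splits_iff_card_roots.mp hsplits]) h2n]
    rw [(Matrix.charpoly_monic A).leadingCoeff, hdeg]
    have : n - (n - 2) = 2 := by omega
    rw [this, hΛ]
    ring
  -- diagonal esymm
  have hdiagsum : ((Finset.univ.val.map fun i => A i i)).sum = ((S : ℝ) : ℂ) := by
    rw [← Finset.sum_eq_multiset_sum]
    rw [hStr]
    simp [hA, Matrix.map_apply]
  have hdiagsq : (((Finset.univ.val.map fun i => A i i)).map (fun x => x ^ 2)).sum
      = ((∑ i, (B i i) ^ 2 : ℝ) : ℂ) := by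
    rw [Multiset.map_map]
    have : ((fun x : ℂ => x ^ 2) ∘ fun i => A i i) = fun i => ((B i i : ℝ) : ℂ) ^ 2 := by
      funext i; simp [hA, Matrix.map_apply]
    rw [this, ← Finset.sum_eq_multiset_sum]
    push_cast
    rfl
  have hpairsR : S ^ 2 = ∑ i, (B i i) ^ 2 + 2 * P2 := by
    rw [hStr, hP2]; exact pairs_sq _
  have hdiagesymm : ((Finset.univ.val.map fun i => A i i)).esymm 2 = ((P2 : ℝ) : ℂ) := by
    have h2 := esymm_two_eq ((Finset.univ.val.map fun i => A i i))
    rw [hdiagsum, hdiagsq] at h2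
    have h3 : ((S : ℝ) : ℂ) ^ 2 - ((∑ i, (B i i) ^ 2 : ℝ) : ℂ) = 2 * ((P2 : ℝ) : ℂ) := by
      have hc := congrArg (fun x : ℝ => (x : ℂ)) hpairsR
      push_cast at hc ⊢
      linear_combination hc
    rw [h3] at h2
    exact mul_left_cancel₀ (two_ne_zero) h2
  have hO2C : (∑ i, ∑ j ∈ Finset.univ.filter (fun j => i < j), A i j * A j i)
      = ((O2 : ℝ) : ℂ) := by
    rw [hO2]
    push_cast
    refine Finset.sum_congr rfl fun i _ => Finset.sum_congr rfl fun j _ => ?_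
    simp [hA, Matrix.map_apply]
  -- sum of squares of roots
  have hsumsq : (Λ.map (fun z => z ^ 2)).sum = ((S ^ 2 - 2 * P2 + χoff : ℝ) : ℂ) := by
    have h2 := esymm_two_eq Λ
    rw [hesymm, charpoly_coeff_sub_two hn A, hdiagesymm, hO2C, hΛsum] at h2
    have hχC : ((χoff : ℝ) : ℂ) = 2 * ((O2 : ℝ) : ℂ) := by
      exact_mod_cast congrArg (fun x : ℝ => (x : ℂ)) hχ
    push_cast at h2 hχC ⊢
    linear_combination h2 - hχC
  -- real parts
  have hre_split : ∀ z : ℂ, z.re ^ 2 = (z ^ 2).re + z.im ^ 2 := by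
    intro z
    simp only [pow_two, Complex.mul_re]
    ring
  have hre_sum : (Λ.map (fun z => (z ^ 2).re)).sum = S ^ 2 - 2 * P2 + χoff := by
    have h5 := map_multiset_sum Complex.reAddGroupHom (Λ.map (fun z => z ^ 2))
    rw [Multiset.map_map, hsumsq] at h5
    simpa [Function.comp, ← Complex.ofReal_pow] using h5.symm
  have hQsum : (Λ.map (fun z => z.re ^ 2)).sum = S ^ 2 - 2 * P2 + χoff + h := by
    have hmapeq : (Λ.map (fun z => z.re ^ 2)).sum
        = (Λ.map (fun z => (z ^ 2).re)).sum + (Λ.map (fun z => z.im ^ 2)).sum := by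
      rw [← Multiset.sum_map_add]
      exact congrArg Multiset.sum (Multiset.map_congr rfl fun z _ => hre_split z)
    rw [hmapeq, hre_sum, hh]
  have hSre : (Λ.map Complex.re).sum = S := by
    have h5 := map_multiset_sum Complex.reAddGroupHom Λ
    rw [hΛsum] at h5
    simpa using h5.symm
  -- decompose Λ
  obtain ⟨t, ht⟩ := Multiset.exists_cons_of_mem hmem
  set x : ℝ := lam0.re with hx
  set Q : ℝ := S ^ 2 - 2 * P2 + χoff + h with hQdef
  have hn2 : (2 : ℝ) ≤ (n : ℝ) := by exact_mod_cast hn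
  have hcardt : (Multiset.card t : ℝ) = (n : ℝ) - 1 := by
    have h7 : Multiset.card Λ = Multiset.card t + 1 := by rw [ht]; simp
    have h8 : Multiset.card t = n - 1 := by omega
    rw [h8, Nat.cast_sub (by omega : 1 ≤ n), Nat.cast_one]
  have htsum : (t.map Complex.re).sum = S - x := by
    rw [ht, Multiset.map_cons, Multiset.sum_cons] at hSre
    rw [hx]; linarith
  have htsq : (t.map (fun z => z.re ^ 2)).sum = Q - x ^ 2 := by
    rw [ht, Multiset.map_cons, Multiset.sum_cons] at hQsum
    rw [hx, hQdef]; linarith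
  have hcs := ms_cs (t.map Complex.re)
  rw [Multiset.map_map, Multiset.card_map, htsum, hcardt] at hcs
  have hcomp : (t.map ((fun y : ℝ => y ^ 2) ∘ Complex.re)).sum = Q - x ^ 2 := htsq
  rw [hcomp] at hcs
  -- quadratic manipulation
  have hkey : ((n : ℝ) * x - S) ^ 2 ≤ ((n : ℝ) - 1) * ((n : ℝ) * Q - S ^ 2) := by
    nlinarith [hcs]
  have hn0 : (0 : ℝ) < (n : ℝ) := by linarith
  have e1 : (x - S / n) ^ 2 * (n : ℝ) ^ 2 = ((n : ℝ) * x - S) ^ 2 := by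
    field_simp
  have e2 : (((n : ℝ) - 1) / n * (Q - S ^ 2 / n)) * (n : ℝ) ^ 2
      = ((n : ℝ) - 1) * ((n : ℝ) * Q - S ^ 2) := by
    field_simp
  have hfin : (x - S / n) ^ 2 ≤ ((n : ℝ) - 1) / n * (Q - S ^ 2 / n) := by
    have h6 : (x - S / n) ^ 2 * (n : ℝ) ^ 2
        ≤ (((n : ℝ) - 1) / n * (Q - S ^ 2 / n)) * (n : ℝ) ^ 2 := by
      rw [e1, e2]; exact hkey
    exact le_of_mul_le_mul_right h6 (by positivity)
  have hFQ : Fdiag + χoff + h = Q - S ^ 2 / (n : ℝ) := by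
    have h9 : (∑ i, (B i i) ^ 2) = S ^ 2 - 2 * P2 := by linarith [hpairsR]
    rw [hF, hQdef, h9]
    field_simp
    ring
  have hx1 : x - S / (n : ℝ) ≤ Real.sqrt (((n : ℝ) - 1) / n * (Q - S ^ 2 / n)) := by
    calc x - S / (n : ℝ) ≤ |x - S / (n : ℝ)| := le_abs_self _
      _ = Real.sqrt ((x - S / (n : ℝ)) ^ 2) := (Real.sqrt_sq_eq_abs _).symm
      _ ≤ _ := Real.sqrt_le_sqrt hfin
  have hsplit2 : Real.sqrt (((n : ℝ) - 1) / n * (Q - S ^ 2 / n))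
      = Real.sqrt ((n : ℝ) - 1) / Real.sqrt n * Real.sqrt (Fdiag + χoff + h) := by
    rw [← hFQ, Real.sqrt_mul (div_nonneg (by linarith) (by linarith) : (0 : ℝ) ≤ ((n : ℝ) - 1) / n),
      Real.sqrt_div (by linarith : (0 : ℝ) ≤ (n : ℝ) - 1)]
  rw [hsplit2] at hx1
  linarith
end

section
/- Let B be a real n×n matrix (n ≥ 2) with entries b_ij and eigenvalue multiset Λ over ℂ. Then there exists an eigenvalue λ₀ ∈ Λ with Re(λ₀) ≥ (1/n)·tr(B) + (1/(√n·√(n−1)))·√(F_diag + χ_off + h), where F_diag = ((n−1)/n)·Σ_i b_ii² − (2/n)·Σ_{i<j} b_ii·b_jj, χ_off = 2·Σ_{i<j} b_ij·b_ji, and h = Σ_{λ∈Λ} (Im λ)². -/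
open Finset Matrix Polynomial

open Finset Matrix Polynomial

lemma sum_sq_roots_charpoly {n : ℕ} (A : Matrix (Fin n) (Fin n) ℂ) :
    ((A.charpoly.roots).map (fun a => a ^ 2)).sum = Matrix.trace (A * A) := by
  classical
  set Λ := A.charpoly.roots with hΛdef
  have hsplit : A.charpoly.Splits := IsAlgClosed.splits A.charpoly
  have hroots : A.charpoly = (Λ.map fun a => X - C a).prod :=
    Polynomial.Splits.eq_prod_roots_of_monic hsplit A.charpoly_monic
  have hcard : Multiset.card Λ = n := by
    rw [hΛdef, (Polynomial.splits_iff_card_roots).mp hsplit,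
      Matrix.charpoly_natDegree_eq_dim, Fintype.card_fin]
  set φ : ℂ[X] →+* ℂ[X] := (Polynomial.aeval (X ^ 2 : ℂ[X])).toRingHom with hφdef
  set ψ : ℂ[X] →+* ℂ[X] := (Polynomial.aeval (-X : ℂ[X])).toRingHom with hψdef
  have hφX : φ X = X ^ 2 := by simp [hφdef]
  have hφC : ∀ a : ℂ, φ (C a) = C a := by simp [hφdef]
  have hψX : ψ X = -X := by simp [hψdef]
  have hψC : ∀ a : ℂ, ψ (C a) = C a := by simp [hψdef]
  set P : Matrix (Fin n) (Fin n) ℂ[X] := A.map C with hPdef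
  have hc : Commute (Matrix.scalar (Fin n) (X : ℂ[X])) P :=
    Matrix.scalar_commute _ (fun r => Commute.all _ _) _
  have hcharm : ∀ M : Matrix (Fin n) (Fin n) ℂ,
      charmatrix M = Matrix.scalar (Fin n) X - M.map C := by
    intro M
    rw [charmatrix]
    rfl
  -- φ of charpoly of A*A
  have hφmap : (charmatrix (A * A)).map φ
      = Matrix.scalar (Fin n) (X ^ 2 : ℂ[X]) - (A * A).map C := by
    ext i j
    by_cases hij : i = j
    · subst hij
      simp [Matrix.map_apply, charmatrix_apply_eq, Matrix.scalar_apply, hφX, hφC,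
        Matrix.sub_apply, Matrix.diagonal_apply_eq, Matrix.mul_apply, map_sum, _root_.map_mul]
    · simp [Matrix.map_apply, charmatrix_apply_ne _ _ _ hij, Matrix.scalar_apply, hφC,
        Matrix.sub_apply, Matrix.diagonal_apply_ne _ hij, Matrix.mul_apply, map_sum, _root_.map_mul]
  have hfact : Matrix.scalar (Fin n) (X ^ 2 : ℂ[X]) - (A * A).map C
      = (Matrix.scalar (Fin n) X - P) * (Matrix.scalar (Fin n) X + P) := by
    have hm : (A * A).map C = P * P := Matrix.map_mul
    have h2 : (Matrix.scalar (Fin n) X - P) * (Matrix.scalar (Fin n) X + P)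
        = Matrix.scalar (Fin n) X * Matrix.scalar (Fin n) X - P * P := by
      have := hc.eq
      calc (Matrix.scalar (Fin n) X - P) * (Matrix.scalar (Fin n) X + P)
          = Matrix.scalar (Fin n) X * Matrix.scalar (Fin n) X
            + Matrix.scalar (Fin n) X * P - P * Matrix.scalar (Fin n) X - P * P := by
            noncomm_ring
        _ = Matrix.scalar (Fin n) X * Matrix.scalar (Fin n) X - P * P := by
            rw [← this]; abel
    rw [h2, hm]
    congr 1
    rw [← map_mul (Matrix.scalar (Fin n)), ← pow_two]
  have hφcp : φ ((A * A).charpoly)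
      = (Matrix.scalar (Fin n) X - P).det * (Matrix.scalar (Fin n) X + P).det := by
    rw [Matrix.charpoly, RingHom.map_det, RingHom.mapMatrix_apply, hφmap, hfact, det_mul]
  have hcpA : A.charpoly = (Matrix.scalar (Fin n) X - P).det := by
    rw [Matrix.charpoly, hcharm]
  -- ψ of charpoly of A
  have hψmap : (charmatrix A).map ψ = -(Matrix.scalar (Fin n) X + P) := by
    ext i j
    by_cases hij : i = j
    · subst hij
      simp [Matrix.map_apply, charmatrix_apply_eq, Matrix.scalar_apply, hψX, hψC,
        Matrix.diagonal_apply_eq, hPdef, Matrix.neg_apply, Matrix.add_apply]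
      ring
    · simp [Matrix.map_apply, charmatrix_apply_ne _ _ _ hij, Matrix.scalar_apply, hψC,
        Matrix.diagonal_apply_ne _ hij, hPdef, Matrix.neg_apply, Matrix.add_apply]
  have hψcp : ψ (A.charpoly) = (-1) ^ n * (Matrix.scalar (Fin n) X + P).det := by
    rw [Matrix.charpoly, RingHom.map_det, RingHom.mapMatrix_apply, hψmap, Matrix.det_neg,
      Fintype.card_fin]
  have hdet2 : (Matrix.scalar (Fin n) X + P).det = (-1) ^ n * ψ (A.charpoly) := by
    rw [hψcp, ← mul_assoc, ← mul_pow]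
    simp
  -- polynomial side
  have hψprod : ψ (A.charpoly) = ((-1 : ℂ[X])) ^ n * (Λ.map fun a => X + C a).prod := by
    rw [hroots, map_multiset_prod, Multiset.map_map]
    have : ((Λ.map fun a => ψ (X - C a))).prod = ((Λ.map fun a => (-1) * (X + C a))).prod := by
      congr 1
      apply Multiset.map_congr rfl
      intro a _
      rw [map_sub, hψX, hψC a]
      ring
    rw [Function.comp_def] at *
    rw [this, Multiset.prod_map_mul]
    congr 1
    rw [Multiset.map_const', Multiset.prod_replicate, hcard]
  have hkey : φ ((A * A).charpoly) = φ (((Λ.map fun a => a ^ 2).map fun a => X - C a).prod) := by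
    rw [hφcp, ← hcpA, hdet2, hψprod, hroots]
    have hone : ((-1 : ℂ[X]) ^ n) * ((-1 : ℂ[X]) ^ n) = 1 := by
      rw [← mul_pow]; simp
    rw [← mul_assoc ((-1 : ℂ[X]) ^ n) ((-1 : ℂ[X]) ^ n), hone, one_mul]
    rw [map_multiset_prod, Multiset.map_map, Multiset.map_map, ← Multiset.prod_map_mul]
    congr 1
    apply Multiset.map_congr rfl
    intro a _
    simp only [Function.comp_apply, map_sub, hφX, hφC, map_pow]
    ring
  have hinj : Function.Injective φ := by
    intro p q hpq
    by_contra hne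
    have hsub : φ (p - q) = 0 := by rw [map_sub, hpq, sub_self]
    have hcomp : (p - q).comp (X ^ 2 : ℂ[X]) = 0 := by
      rw [Polynomial.comp_eq_aeval]; exact hsub
    rcases Polynomial.comp_eq_zero_iff.mp hcomp with h | ⟨_, h⟩
    · exact hne (sub_eq_zero.mp h)
    · have := congrArg Polynomial.natDegree h
      simp [Polynomial.natDegree_X_pow] at this
  have hq : (A * A).charpoly = ((Λ.map fun a => a ^ 2).map fun a => X - C a).prod := hinj hkey
  rw [Matrix.trace_eq_sum_roots_charpoly (A * A), hq, Polynomial.roots_multiset_prod_X_sub_C]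

open Finset

lemma key_dev (n : ℕ) (hn : 2 ≤ n) (x : Fin n → ℝ) :
    ∃ k : Fin n, (∑ i, x i) / n
      + (1 / (Real.sqrt n * Real.sqrt (n - 1)))
        * Real.sqrt (∑ i, (x i - (∑ i, x i) / n) ^ 2) ≤ x k := by
  have hnpos : (0 : ℝ) < n := by
    have : (2 : ℝ) ≤ n := by exact_mod_cast hn
    linarith
  have hn1 : (1 : ℝ) ≤ (n : ℝ) - 1 := by
    have : (2 : ℝ) ≤ n := by exact_mod_cast hn
    linarith
  haveI : Nonempty (Fin n) := ⟨⟨0, by omega⟩⟩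
  set μ : ℝ := (∑ i, x i) / n with hμ
  set d : Fin n → ℝ := fun i => x i - μ with hd
  have hd0 : ∑ i, d i = 0 := by
    simp only [hd, Finset.sum_sub_distrib, Finset.sum_const, Finset.card_univ,
      Fintype.card_fin, nsmul_eq_mul, hμ]
    field_simp
    ring
  set S : ℝ := ∑ i, d i ^ 2 with hS
  have hS0 : 0 ≤ S := Finset.sum_nonneg fun i _ => sq_nonneg _
  obtain ⟨k, -, hk⟩ := Finset.exists_max_image Finset.univ d Finset.univ_nonempty
  obtain ⟨j, -, hj⟩ := Finset.exists_min_image Finset.univ d Finset.univ_nonempty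
  have hk' : ∀ i, d i ≤ d k := fun i => hk i (Finset.mem_univ i)
  have hj' : ∀ i, d j ≤ d i := fun i => hj i (Finset.mem_univ i)
  have hM0 : 0 ≤ d k := by
    by_contra hneg
    push_neg at hneg
    have : ∑ i, d i < ∑ i, (0 : ℝ) :=
      Finset.sum_lt_sum_of_nonempty Finset.univ_nonempty
        (fun i _ => lt_of_le_of_lt (hk' i) hneg)
    simp [hd0] at this
  have hm0 : d j ≤ 0 := by
    by_contra hneg
    push_neg at hneg
    have : ∑ i, (0 : ℝ) < ∑ i, d i :=
      Finset.sum_lt_sum_of_nonempty Finset.univ_nonempty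
        (fun i _ => lt_of_lt_of_le hneg (hj' i))
    simp [hd0] at this
  -- Samuelson-type bound on the minimum
  have hcard_erase : ((Finset.univ.erase j).card : ℝ) = (n : ℝ) - 1 := by
    rw [Finset.card_erase_of_mem (Finset.mem_univ j), Finset.card_univ, Fintype.card_fin]
    have : 1 ≤ n := by omega
    push_cast [Nat.cast_sub this]
    ring
  have h1 : ∑ i ∈ Finset.univ.erase j, d i = -(d j) := by
    rw [Finset.sum_erase_eq_sub (Finset.mem_univ j), hd0]
    ring
  have h2 : ∑ i ∈ Finset.univ.erase j, d i ^ 2 = S - d j ^ 2 := by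
    rw [Finset.sum_erase_eq_sub (Finset.mem_univ j)]
  have hcs := sq_sum_le_card_mul_sum_sq (s := Finset.univ.erase j) (f := d)
  rw [h1, h2] at hcs
  have hsam : (n : ℝ) * d j ^ 2 ≤ ((n : ℝ) - 1) * S := by
    have : (-(d j)) ^ 2 ≤ ((n : ℝ) - 1) * (S - d j ^ 2) := by
      calc (-(d j)) ^ 2 ≤ ((Finset.univ.erase j).card : ℝ) * (S - d j ^ 2) := by
            exact_mod_cast hcs
        _ = ((n : ℝ) - 1) * (S - d j ^ 2) := by rw [hcard_erase]
    nlinarith [this]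
  -- S ≤ n * M * (-m)
  have hSm : S ≤ (n : ℝ) * d k * (-(d j)) := by
    have e1 : S = ∑ i, d i * (d i - d j) := by
      simp only [mul_sub, Finset.sum_sub_distrib]
      rw [← Finset.sum_mul, hd0]
      simp [hS, sq]
    have e2 : ∑ i, d i * (d i - d j) ≤ ∑ i, d k * (d i - d j) :=
      Finset.sum_le_sum fun i _ =>
        mul_le_mul_of_nonneg_right (hk' i) (sub_nonneg.mpr (hj' i))
    have e3 : ∑ i, d k * (d i - d j) = (n : ℝ) * d k * (-(d j)) := by
      rw [← Finset.mul_sum, Finset.sum_sub_distrib, hd0]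
      simp [Finset.card_univ]
      ring
    linarith [e1, e2, e3]
  have hfin : S ≤ ((n : ℝ) * ((n : ℝ) - 1)) * d k ^ 2 := by
    have hnn : (0 : ℝ) ≤ (n : ℝ) * d k ^ 2 :=
      mul_nonneg (le_of_lt hnpos) (sq_nonneg _)
    rcases eq_or_lt_of_le hS0 with hSz | hSpos
    · have : (0 : ℝ) ≤ ((n : ℝ) * ((n : ℝ) - 1)) * d k ^ 2 :=
        mul_nonneg (mul_nonneg (le_of_lt hnpos) (by linarith)) (sq_nonneg _)
      linarith
    · have hsq : S * S ≤ ((n : ℝ) * d k * (-(d j))) * ((n : ℝ) * d k * (-(d j))) :=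
        mul_self_le_mul_self hS0 hSm
      have h6 := mul_le_mul_of_nonneg_left hsam hnn
      have : S * S ≤ (((n : ℝ) * ((n : ℝ) - 1)) * d k ^ 2) * S := by
        nlinarith [hsq, h6]
      exact le_of_mul_le_mul_right this hSpos
  have hdiv : S / ((n : ℝ) * ((n : ℝ) - 1)) ≤ d k ^ 2 := by
    rw [div_le_iff₀ (by nlinarith)]
    linarith
  have hsqrt : Real.sqrt (S / ((n : ℝ) * ((n : ℝ) - 1))) ≤ d k := by
    calc Real.sqrt (S / ((n : ℝ) * ((n : ℝ) - 1))) ≤ Real.sqrt (d k ^ 2) :=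
          Real.sqrt_le_sqrt hdiv
      _ = d k := Real.sqrt_sq hM0
  refine ⟨k, ?_⟩
  have hrw : (1 / (Real.sqrt n * Real.sqrt ((n : ℝ) - 1))) * Real.sqrt S
      = Real.sqrt (S / ((n : ℝ) * ((n : ℝ) - 1))) := by
    rw [Real.sqrt_div hS0, Real.sqrt_mul (le_of_lt hnpos)]
    ring
  have : μ + (1 / (Real.sqrt n * Real.sqrt ((n : ℝ) - 1))) * Real.sqrt S ≤ x k := by
    rw [hrw]
    have : d k = x k - μ := rfl
    linarith [hsqrt]
  exact this

open Finset

lemma sum_split {n : ℕ} (g : Fin n → Fin n → ℝ) (hsymm : ∀ i j, g i j = g j i) :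
    ∑ i, ∑ j, g i j
      = (∑ i, g i i) + 2 * ∑ i, ∑ j ∈ Finset.univ.filter (fun j => i < j), g i j := by
  have tri : ∀ i j : Fin n, g i j
      = (if i < j then g i j else 0) + (if j < i then g i j else 0)
        + (if j = i then g i j else 0) := by
    intro i j
    rcases lt_trichotomy i j with h | h | h
    · simp [h, asymm h, ne_of_gt h]
    · subst h; simp [lt_irrefl]
    · simp [h, asymm h, ne_of_lt h]
  have hrow : ∀ i : Fin n, ∑ j, g i j
      = (∑ j ∈ Finset.univ.filter (fun j => i < j), g i j)
        + (∑ j ∈ Finset.univ.filter (fun j => j < i), g i j) + g i i := by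
    intro i
    rw [Finset.sum_congr rfl (fun j _ => tri i j)]
    rw [Finset.sum_add_distrib, Finset.sum_add_distrib, ← Finset.sum_filter,
      ← Finset.sum_filter]
    congr 1
    simp
  have hswap : ∑ i, ∑ j ∈ Finset.univ.filter (fun j => j < i), g i j
      = ∑ i, ∑ j ∈ Finset.univ.filter (fun j => i < j), g i j := by
    have e1 : ∑ i, ∑ j ∈ Finset.univ.filter (fun j => j < i), g i j
        = ∑ i : Fin n, ∑ j : Fin n, if j < i then g i j else 0 := by
      apply Finset.sum_congr rfl
      intro i _
      rw [Finset.sum_filter]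
    rw [e1, Finset.sum_comm]
    apply Finset.sum_congr rfl
    intro i _
    rw [Finset.sum_filter]
    apply Finset.sum_congr rfl
    intro j _
    rw [hsymm]
  rw [Finset.sum_congr rfl (fun i _ => hrow i), Finset.sum_add_distrib,
    Finset.sum_add_distrib, hswap]
  ring

/-- Lower eigenvalue bound: some eigenvalue of a real matrix `B` has real part at least
`tr(B)/n + (1/(√n·√(n−1)))·√(F_diag + χ_off + h)`. -/
theorem eigenvalue_re_lower_bound (n : ℕ) (hn : 2 ≤ n) (B : Matrix (Fin n) (Fin n) ℝ)
    (Λ : Multiset ℂ)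
    (hΛ : Λ = (Matrix.charpoly (B.map (Complex.ofReal ·))).roots)
    (Fdiag χoff h : ℝ)
    (hF : Fdiag = ((n - 1 : ℝ) / n) * ∑ i, (B i i) ^ 2
        - (2 / (n : ℝ)) * ∑ i, ∑ j ∈ Finset.univ.filter (fun j => i < j), B i i * B j j)
    (hχ : χoff = 2 * ∑ i, ∑ j ∈ Finset.univ.filter (fun j => i < j), B i j * B j i)
    (hh : h = (Λ.map (fun lam => lam.im ^ 2)).sum) :
    ∃ lam0 ∈ Λ, lam0.re ≥ Matrix.trace B / n
      + (1 / (Real.sqrt n * Real.sqrt (n - 1))) * Real.sqrt (Fdiag + χoff + h) := by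
  classical
  set A : Matrix (Fin n) (Fin n) ℂ := B.map (Complex.ofReal ·) with hA
  have hn2 : (2 : ℝ) ≤ (n : ℝ) := by exact_mod_cast hn
  have hn0 : (n : ℝ) ≠ 0 := by linarith
  -- cardinality of the root multiset
  have hsplit : A.charpoly.Splits := IsAlgClosed.splits A.charpoly
  have hcard : Multiset.card Λ = n := by
    rw [hΛ, (Polynomial.splits_iff_card_roots).mp hsplit,
      Matrix.charpoly_natDegree_eq_dim, Fintype.card_fin]
  -- trace identities
  have hsum1 : Λ.sum = ((Matrix.trace B : ℝ) : ℂ) := by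
    rw [hΛ, ← Matrix.trace_eq_sum_roots_charpoly A]
    simp [hA, Matrix.trace, Matrix.diag, Matrix.map_apply]
  have hsum2 : (Λ.map (fun a => a ^ 2)).sum = ((∑ i, ∑ j, B i j * B j i : ℝ) : ℂ) := by
    rw [hΛ, sum_sq_roots_charpoly A]
    simp [hA, Matrix.trace, Matrix.diag, Matrix.mul_apply, Matrix.map_apply]
  -- enumerate the multiset by a function on `Fin n`
  have hlen : Λ.toList.length = n := by rw [Multiset.length_toList, hcard]
  set f : Fin n → ℂ := fun i => Λ.toList.get (Fin.cast hlen.symm i) with hf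
  have hofn : List.ofFn f = Λ.toList := by
    apply List.ext_getElem
    · simp [hlen]
    · intro i h1 h2
      simp [hf]
  have hΛeq : Λ = Multiset.ofList (List.ofFn f) := by
    rw [hofn, Multiset.coe_toList]
  have hmem : ∀ i, f i ∈ Λ := by
    intro i
    rw [hΛeq]
    rw [Multiset.mem_coe]
    simp only [List.mem_ofFn]
    exact ⟨i, rfl⟩
  -- transfer multiset sums to finite sums
  have hmapsum : ∀ {α : Type} [AddCommMonoid α] (g : ℂ → α),
      (Λ.map g).sum = ∑ i, g (f i) := by
    intro α _ g
    rw [hΛeq]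
    rw [Multiset.map_coe, Multiset.sum_coe, List.map_ofFn, List.sum_ofFn]
    rfl
  set x : Fin n → ℝ := fun i => (f i).re with hx
  set y : Fin n → ℝ := fun i => (f i).im with hy
  have hxsum : ∑ i, x i = Matrix.trace B := by
    have h0 : Λ.sum = ∑ i, f i := by
      rw [hΛeq, Multiset.sum_coe, List.sum_ofFn]
    have h1 : (∑ i, f i) = ((Matrix.trace B : ℝ) : ℂ) := by rw [← h0, hsum1]
    have := congrArg Complex.re h1
    simpa [Complex.re_sum, hx] using this
  have hxysum : ∑ i, (x i ^ 2 - y i ^ 2) = ∑ i, ∑ j, B i j * B j i := by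
    have h1 : (∑ i, (f i) ^ 2) = ((∑ i, ∑ j, B i j * B j i : ℝ) : ℂ) := by
      rw [← hmapsum (fun a => a ^ 2), hsum2]
    have := congrArg Complex.re h1
    rw [Complex.re_sum, Complex.ofReal_re] at this
    rw [← this]
    apply Finset.sum_congr rfl
    intro i _
    rw [sq (f i), Complex.mul_re]
    simp [hx, hy]
    ring
  have hysum : ∑ i, y i ^ 2 = h := by
    rw [hh, hmapsum (fun lam => lam.im ^ 2)]
  -- the variance computation
  have hvar : ∑ i, (x i - (∑ i, x i) / n) ^ 2 = Fdiag + χoff + h := by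
    have expand : ∑ i, (x i - (∑ i, x i) / n) ^ 2
        = (∑ i, x i ^ 2) - (∑ i, x i) ^ 2 / n := by
      set T := ∑ i, x i with hT
      have he : ∀ i : Fin n, (x i - T / n) ^ 2
          = x i ^ 2 - 2 * (T / n) * x i + (T / n) ^ 2 := fun i => by ring
      rw [Finset.sum_congr rfl fun i _ => he i, Finset.sum_add_distrib,
        Finset.sum_sub_distrib, ← Finset.mul_sum, Finset.sum_const, Finset.card_univ,
        Fintype.card_fin, nsmul_eq_mul, ← hT]
      field_simp
      ring
    have htrB : Matrix.trace B = ∑ i, B i i := by simp [Matrix.trace, Matrix.diag]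
    have hsplitBB := sum_split (fun i j => B i j * B j i) (fun i j => by ring)
    have hsplitDD := sum_split (fun i j => B i i * B j j) (fun i j => by ring)
    have hsq : (∑ i, B i i) ^ 2 = ∑ i, ∑ j, B i i * B j j := by
      rw [sq, Finset.sum_mul_sum]
    have e1 : ∑ i, x i ^ 2
        = (∑ i, B i i * B i i
            + 2 * ∑ i, ∑ j ∈ Finset.univ.filter (fun j => i < j), B i j * B j i) + h := by
      have hsplit2 : ∑ i, x i ^ 2 = ∑ i, (x i ^ 2 - y i ^ 2) + ∑ i, y i ^ 2 := by
        rw [← Finset.sum_add_distrib]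
        apply Finset.sum_congr rfl
        intro i _
        ring
      rw [hsplit2, hxysum, hysum, hsplitBB]
    have e2 : (∑ i, x i) ^ 2
        = ∑ i, B i i * B i i
            + 2 * ∑ i, ∑ j ∈ Finset.univ.filter (fun j => i < j), B i i * B j j := by
      rw [hxsum, htrB, hsq, hsplitDD]
    have hBii : ∑ i, B i i * B i i = ∑ i, (B i i) ^ 2 := by
      apply Finset.sum_congr rfl
      intro i _
      ring
    rw [expand, e1, e2, hF, hχ, hBii]
    field_simp
    ring
  -- apply the deviation lemma
  obtain ⟨k, hk⟩ := key_dev n hn x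
  refine ⟨f k, hmem k, ?_⟩
  rw [ge_iff_le]
  have : (x k : ℝ) = (f k).re := rfl
  rw [← this]
  calc Matrix.trace B / ↑n
        + 1 / (Real.sqrt ↑n * Real.sqrt (↑n - 1)) * Real.sqrt (Fdiag + χoff + h)
      = (∑ i, x i) / ↑n + 1 / (Real.sqrt ↑n * Real.sqrt (↑n - 1))
          * Real.sqrt (∑ i, (x i - (∑ i, x i) / n) ^ 2) := by rw [← hxsum, ← hvar]
    _ ≤ x k := hk
end

section
/- Let B be a real n×n matrix (n ≥ 2) with entries b_ij and eigenvalue multiset Λ over ℂ, and set F_diag = ((n−1)/n)·Σ_i b_ii² − (2/n)·Σ_{i<j} b_ii·b_jj, χ_off = 2·Σ_{i<j} b_ij·b_ji, h = Σ_{λ∈Λ} (Im λ)². If (1/n)·tr(B) + (1/(√n·√(n−1)))·√(F_diag + χ_off + h) > 0, then B has an eigenvalue with strictly positive real part (the equilibrium associated with B is unstable). -/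
open Finset Matrix

open Polynomial Matrix

lemma trace_fromBlocks' {m n R : Type*} [Fintype m] [Fintype n] [AddCommMonoid R]
    (A : Matrix m m R) (B : Matrix m n R) (C : Matrix n m R) (D : Matrix n n R) :
    Matrix.trace (fromBlocks A B C D) = Matrix.trace A + Matrix.trace D := by
  simp [Matrix.trace, Fintype.sum_sum_type, fromBlocks]

lemma key : ∀ (n : ℕ) (M : Matrix (Fin n) (Fin n) ℂ),
    ((M.charpoly.roots).map (fun z => z ^ 2)).sum = Matrix.trace (M * M) := by
  intro n
  induction n with
  | zero =>
    intro M
    have h1 : M.charpoly = 1 := by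
      rw [Matrix.charpoly, Matrix.det_eq_one_of_card_eq_zero (by simp)]
    rw [h1, Polynomial.roots_one]
    simp [Matrix.trace]
  | succ n ih =>
    intro M
    set f := Matrix.toLin' M with hf
    obtain ⟨μ, hμ⟩ := Module.End.exists_eigenvalue f
    obtain ⟨v, hv⟩ := hμ.exists_hasEigenvector
    have hli : LinearIndepOn ℂ id ({v} : Set (Fin (n+1) → ℂ)) :=
      LinearIndepOn.singleton hv.2
    let b0 := Module.Basis.extend hli
    haveI : Fintype (hli.extend (Set.subset_univ ({v} : Set (Fin (n+1) → ℂ)))) :=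
      FiniteDimensional.fintypeBasisIndex b0
    have hcard : Fintype.card (hli.extend (Set.subset_univ ({v} : Set (Fin (n+1) → ℂ)))) = n + 1 := by
      rw [← Module.finrank_eq_card_basis b0]
      simp
    have hvmem : v ∈ hli.extend (Set.subset_univ ({v} : Set (Fin (n+1) → ℂ))) :=
      hli.subset_extend _ rfl
    let e0 := Fintype.equivOfCardEq (α := (hli.extend (Set.subset_univ ({v} : Set (Fin (n+1) → ℂ)))))
      (β := Fin 1 ⊕ Fin n) (by simp [hcard]; omega)
    let e := e0.trans (Equiv.swap (e0 ⟨v, hvmem⟩) (Sum.inl 0))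
    let b := b0.reindex e
    have hb0 : b (Sum.inl 0) = v := by
      have he : e ⟨v, hvmem⟩ = Sum.inl 0 := by
        simp [e, Equiv.trans_apply, Equiv.swap_apply_left]
      rw [show b (Sum.inl 0) = b0 (e.symm (Sum.inl 0)) from Module.Basis.reindex_apply b0 e (Sum.inl 0),
        ← he, Equiv.symm_apply_apply]
      exact Module.Basis.extend_apply_self hli ⟨v, hvmem⟩
    set A := LinearMap.toMatrix b b f with hA
    have hMbasis : LinearMap.toMatrix (Pi.basisFun ℂ (Fin (n+1))) (Pi.basisFun ℂ (Fin (n+1))) f = M := by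
      rw [LinearMap.toMatrix_eq_toMatrix']
      exact LinearMap.toMatrix'_toLin' M
    have hchar : A.charpoly = M.charpoly := by
      rw [LinearMap.charpoly_toMatrix, ← hMbasis, LinearMap.charpoly_toMatrix]
    have htr : Matrix.trace (A * A) = Matrix.trace (M * M) := by
      rw [← LinearMap.toMatrix_mul, ← LinearMap.trace_eq_matrix_trace,
        LinearMap.trace_eq_matrix_trace ℂ (Pi.basisFun ℂ (Fin (n+1))),
        LinearMap.toMatrix_mul, hMbasis]
    have hcol : ∀ i, A i (Sum.inl 0) = if i = Sum.inl 0 then μ else 0 := by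
      intro i
      rw [hA, LinearMap.toMatrix_apply, hb0, hv.apply_eq_smul, ← hb0, _root_.map_smul,
        Module.Basis.repr_self]
      simp [Finsupp.single_apply, eq_comm]
    have hZ : A.toBlocks₂₁ = 0 := by
      ext i j
      have := hcol (Sum.inr i)
      simp only [Fin.fin_one_eq_zero j] at *
      simpa [Matrix.toBlocks₂₁] using this
    have hAblocks : A = fromBlocks A.toBlocks₁₁ A.toBlocks₁₂ 0 A.toBlocks₂₂ := by
      rw [← hZ, fromBlocks_toBlocks]
    have hP : A.toBlocks₁₁ = fun _ _ => μ := by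
      ext i j
      have := hcol (Sum.inl i)
      simp only [Fin.fin_one_eq_zero i, Fin.fin_one_eq_zero j] at *
      simpa [Matrix.toBlocks₁₁] using this
    have hPchar : (A.toBlocks₁₁).charpoly = X - C μ := by
      rw [Matrix.charpoly, Matrix.det_fin_one, charmatrix_apply_eq, hP]
    have hroots : M.charpoly.roots = μ ::ₘ (A.toBlocks₂₂).charpoly.roots := by
      rw [← hchar, hAblocks, Matrix.charpoly_fromBlocks_zero₂₁, hPchar,
        Polynomial.roots_mul (mul_ne_zero (X_sub_C_ne_zero μ) (A.toBlocks₂₂).charpoly_monic.ne_zero),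
        Polynomial.roots_X_sub_C]
      rfl
    have htr2 : Matrix.trace (A * A) = μ ^ 2 + Matrix.trace (A.toBlocks₂₂ * A.toBlocks₂₂) := by
      conv_lhs => rw [hAblocks]
      rw [Matrix.fromBlocks_multiply, trace_fromBlocks', Matrix.mul_zero, add_zero,
        Matrix.zero_mul, zero_add, hP]
      congr 1
      rw [Matrix.trace_fin_one]
      simp [Matrix.mul_apply, sq]
      exact Matrix.mul_apply.trans (by simp)
    rw [hroots, Multiset.map_cons, Multiset.sum_cons, ih, ← htr, htr2]

open Finset Matrix

-- max element of a nonempty multiset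
lemma multiset_exists_max (s : Multiset ℝ) (hs : s ≠ 0) : ∃ a ∈ s, ∀ b ∈ s, b ≤ a := by
  induction s using Multiset.induction with
  | empty => exact absurd rfl hs
  | cons a t ih =>
    rcases eq_or_ne t 0 with rfl | ht
    · exact ⟨a, by simp⟩
    · obtain ⟨m, hm, hmax⟩ := ih ht
      rcases le_total m a with h | h
      · exact ⟨a, Multiset.mem_cons_self a t, by
          intro b hb; rcases Multiset.mem_cons.1 hb with rfl | hb
          · exact le_refl b
          · exact (hmax b hb).trans h⟩
      · exact ⟨m, Multiset.mem_cons_of_mem hm, by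
          intro b hb; rcases Multiset.mem_cons.1 hb with rfl | hb
          · exact h
          · exact hmax b hb⟩

lemma samuelson (s : Multiset ℝ) (hs : s ≠ 0) : ∃ a ∈ s,
    s.sum / s.card ≤ a ∧
    (s.map (fun x => (x - s.sum / s.card) ^ 2)).sum
      ≤ ((s.card : ℝ) * ((s.card : ℝ) - 1)) * (a - s.sum / s.card) ^ 2 := by
  obtain ⟨a, ha, hmax⟩ := multiset_exists_max s hs
  set n : ℕ := Multiset.card s with hn
  have hn1 : 1 ≤ n := by
    rw [hn, Nat.one_le_iff_ne_zero]
    simpa using hs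
  have hnR : (0:ℝ) < n := by exact_mod_cast hn1
  set μ : ℝ := s.sum / n with hμ
  have hμa : μ ≤ a := by
    rw [hμ, div_le_iff₀ hnR]
    have := Multiset.sum_le_card_nsmul s a hmax
    rw [nsmul_eq_mul] at this
    linarith [this]
  set D : ℝ := a - μ with hD
  have hD0 : 0 ≤ D := by simp [hD]; linarith
  -- a minimal element
  have hex : ∃ x0 ∈ s, ∀ c ∈ s, x0 ≤ c := by
    obtain ⟨b, hb, hb'⟩ := multiset_exists_max (s.map (fun x => -x)) (by simpa using hs)
    obtain ⟨x0, hx0, rfl⟩ := Multiset.mem_map.1 hb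
    exact ⟨x0, hx0, fun c hc => by
      have := hb' (-c) (Multiset.mem_map_of_mem _ hc); linarith⟩
  obtain ⟨x0, hx0, hmin⟩ := hex
  have hx0μ : x0 ≤ μ := by
    rw [hμ, le_div_iff₀ hnR]
    have := Multiset.card_nsmul_le_sum (s := s) (a := x0) hmin
    rw [nsmul_eq_mul] at this
    linarith [this]
  set P : ℝ := (s.map (fun x => max (x - μ) 0)).sum with hP
  set N : ℝ := (s.map (fun x => max (μ - x) 0)).sum with hNdef
  have hP0 : 0 ≤ P := Multiset.sum_nonneg (by
    intro x hx; obtain ⟨y, _, rfl⟩ := Multiset.mem_map.1 hx; exact le_max_right _ _)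
  have hPN : P = N := by
    have hsum : P - N = (s.map (fun x => x - μ)).sum := by
      rw [hP, hNdef, ← Multiset.sum_map_sub]
      congr 1
      apply Multiset.map_congr rfl
      intro x _
      rcases le_total x μ with h | h
      · rw [max_eq_right (by linarith), max_eq_left (by linarith)]; ring
      · rw [max_eq_left (by linarith), max_eq_right (by linarith)]; ring
    have hzero : (s.map (fun x => x - μ)).sum = 0 := by
      rw [Multiset.sum_map_sub]
      simp only [Multiset.map_id', Multiset.map_const', Multiset.sum_replicate]
      rw [nsmul_eq_mul, hμ]
      field_simp
      rw [← hn]; ring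
    linarith [hsum, hzero]
  have hPle : P ≤ ((n:ℝ) - 1) * D := by
    have hcons : s = x0 ::ₘ s.erase x0 := (Multiset.cons_erase hx0).symm
    have : P = max (x0 - μ) 0 + ((s.erase x0).map (fun x => max (x - μ) 0)).sum := by
      rw [hP]; conv_lhs => rw [hcons]
      rw [Multiset.map_cons, Multiset.sum_cons]
    rw [this, max_eq_right (by linarith)]
    rw [zero_add]
    have hle := Multiset.sum_le_card_nsmul ((s.erase x0).map (fun x => max (x - μ) 0)) D (by
      intro x hx; obtain ⟨y, hy, rfl⟩ := Multiset.mem_map.1 hx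
      have hy' : y ∈ s := Multiset.mem_of_mem_erase hy
      exact max_le (by have := hmax y hy'; simp [hD]; linarith) hD0)
    rw [nsmul_eq_mul] at hle
    refine hle.trans ?_
    have hcarderase : (Multiset.card ((s.erase x0).map fun x => max (x - μ) 0) : ℝ) = (n:ℝ) - 1 := by
      rw [Multiset.card_map, Multiset.card_erase_of_mem hx0, Nat.pred_eq_sub_one,
        Nat.cast_pred (by omega : 0 < Multiset.card s), hn]
    rw [hcarderase]
  have hkey : (s.map (fun x => (x - μ) ^ 2)).sum ≤ P * D + N * P := by
    have := Multiset.sum_map_le_sum_map (s := s) (fun x => (x - μ)^2)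
      (fun x => max (x - μ) 0 * D + max (μ - x) 0 * P) ?_
    · calc (s.map (fun x => (x - μ) ^ 2)).sum
          ≤ (s.map (fun x => max (x - μ) 0 * D + max (μ - x) 0 * P)).sum := this
        _ = P * D + N * P := by
            rw [Multiset.sum_map_add]
            congr 1
            · rw [← Multiset.sum_map_mul_right]
            · rw [← Multiset.sum_map_mul_right]
    · intro x hx
      rcases le_total μ x with h | h
      · have h1 : x - μ ≤ D := by have := hmax x hx; simp [hD]; linarith
        rw [max_eq_left (by linarith : (0:ℝ) ≤ x - μ), max_eq_right (by linarith : μ - x ≤ 0)]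
        nlinarith
      · have h2 : μ - x ≤ N := by
          rw [hPN] at *
          have : max (μ - x) 0 ≤ N := by
            rw [hNdef]
            exact Multiset.single_le_sum (by
              intro z hz; obtain ⟨y, _, rfl⟩ := Multiset.mem_map.1 hz; exact le_max_right _ _)
              _ (Multiset.mem_map_of_mem _ hx)
          have hmx : max (μ - x) 0 = μ - x := max_eq_left (by linarith)
          linarith [this, hmx.symm.le]
        rw [max_eq_right (by linarith : x - μ ≤ 0), max_eq_left (by linarith : (0:ℝ) ≤ μ - x)]
        nlinarith
  refine ⟨a, ha, hμa, ?_⟩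
  have : P * D + N * P ≤ ((n:ℝ) * ((n:ℝ) - 1)) * D ^ 2 := by
    rw [← hPN]
    nlinarith [hPle, hP0, hD0, hnR]
  calc (s.map (fun x => (x - μ) ^ 2)).sum ≤ P * D + N * P := hkey
    _ ≤ ((n:ℝ) * ((n:ℝ) - 1)) * D ^ 2 := this
    _ = ((n:ℝ) * ((n:ℝ) - 1)) * (a - μ) ^ 2 := by rw [hD]

open Finset Matrix

lemma sum_pairs (n : ℕ) (f : Fin n → Fin n → ℝ) :
    ∑ i, ∑ j, f i j
      = ∑ i, f i i + ∑ i, ∑ j ∈ Finset.univ.filter (fun j => i < j), (f i j + f j i) := by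
  have h1 : ∀ i j : Fin n, f i j =
      (if i < j then f i j else 0) + (if j < i then f i j else 0) + (if i = j then f i j else 0) := by
    intro i j
    rcases lt_trichotomy i j with h | h | h
    · simp [h, not_lt.2 h.le, h.ne]
    · simp [h]
    · simp [h, not_lt.2 h.le, h.ne']
  calc ∑ i, ∑ j, f i j
      = ∑ i, ∑ j, ((if i < j then f i j else 0) + (if j < i then f i j else 0)
          + (if i = j then f i j else 0)) := by
        apply Finset.sum_congr rfl; intro i _; apply Finset.sum_congr rfl; intro j _
        exact h1 i j
    _ = (∑ i, ∑ j, (if i < j then f i j else 0)) + (∑ i, ∑ j, (if j < i then f i j else 0))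
        + ∑ i, ∑ j, (if i = j then f i j else 0) := by
        simp [Finset.sum_add_distrib]
    _ = (∑ i, ∑ j, (if i < j then f i j else 0)) + (∑ j, ∑ i, (if j < i then f i j else 0))
        + ∑ i, f i i := by
        rw [Finset.sum_comm (f := fun i j => if j < i then f i j else 0)]
        congr 1
        apply Finset.sum_congr rfl; intro i _
        simp
    _ = ∑ i, f i i + ∑ i, ∑ j ∈ Finset.univ.filter (fun j => i < j), (f i j + f j i) := by
        rw [add_comm]
        congr 1
        rw [← Finset.sum_add_distrib]
        apply Finset.sum_congr rfl; intro i _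
        rw [← Finset.sum_add_distrib, Finset.sum_filter]
        apply Finset.sum_congr rfl; intro j _
        split_ifs <;> simp

lemma re_msum (s : Multiset ℂ) : s.sum.re = (s.map Complex.re).sum := by
  induction s using Multiset.induction with
  | empty => simp
  | cons a t ih => simp [ih]

lemma resq_msum (s : Multiset ℂ) :
    (s.map (fun z => z.re ^ 2)).sum
      = ((s.map (fun z => z ^ 2)).sum).re + (s.map (fun z => z.im ^ 2)).sum := by
  induction s using Multiset.induction with
  | empty => simp
  | cons a t ih =>
    simp only [Multiset.map_cons, Multiset.sum_cons, Complex.add_re]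
    rw [ih]
    have : (a ^ 2).re = a.re ^ 2 - a.im ^ 2 := by
      rw [sq, Complex.mul_re]; ring
    rw [this]; ring

lemma msum_shift (s : Multiset ℝ) (c : ℝ) :
    (s.map (fun x => (x - c) ^ 2)).sum
      = (s.map (fun x => x ^ 2)).sum - 2 * c * s.sum + (Multiset.card s : ℝ) * c ^ 2 := by
  induction s using Multiset.induction with
  | empty => simp
  | cons a t ih =>
    simp only [Multiset.map_cons, Multiset.sum_cons, Multiset.card_cons]
    rw [ih]
    push_cast
    ring


/-- Instability criterion: if the lower eigenvalue bound
`tr(B)/n + (1/(√n·√(n−1)))·√(F_diag + χ_off + h)` is positive, then `B` has an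
eigenvalue with strictly positive real part. -/
theorem unstable_of_lower_bound_pos (n : ℕ) (hn : 2 ≤ n) (B : Matrix (Fin n) (Fin n) ℝ)
    (Λ : Multiset ℂ)
    (hΛ : Λ = (Matrix.charpoly (B.map (Complex.ofReal ·))).roots)
    (Fdiag χoff h : ℝ)
    (hF : Fdiag = ((n - 1 : ℝ) / n) * ∑ i, (B i i) ^ 2
        - (2 / (n : ℝ)) * ∑ i, ∑ j ∈ Finset.univ.filter (fun j => i < j), B i i * B j j)
    (hχ : χoff = 2 * ∑ i, ∑ j ∈ Finset.univ.filter (fun j => i < j), B i j * B j i)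
    (hh : h = (Λ.map (fun lam => lam.im ^ 2)).sum)
    (hpos : Matrix.trace B / n
      + (1 / (Real.sqrt n * Real.sqrt (n - 1))) * Real.sqrt (Fdiag + χoff + h) > 0) :
    ∃ lam0 ∈ Λ, 0 < lam0.re := by
  have hnR : (0:ℝ) < n := by positivity
  have hn1R : (1:ℝ) ≤ (n:ℝ) - 1 := by
    have : (2:ℝ) ≤ n := by exact_mod_cast hn
    linarith
  set Bc := B.map (Complex.ofReal ·) with hBc
  have hmapc : Bc = (Complex.ofRealHom : ℝ →+* ℂ).mapMatrix B := by
    ext i j; simp [hBc]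
  -- cardinality
  have hcard' : Multiset.card Λ = n := by
    rw [hΛ, Polynomial.splits_iff_card_roots.mp (IsAlgClosed.splits Bc.charpoly),
      Matrix.charpoly_natDegree_eq_dim, Fintype.card_fin]
  -- trace
  have htrc : Matrix.trace Bc = ((Matrix.trace B : ℝ) : ℂ) := by
    simp only [Matrix.trace, Matrix.diag, hBc, Matrix.map_apply]
    push_cast
    rfl
  have htrace : ((Matrix.trace B : ℝ) : ℂ) = Λ.sum := by
    rw [hΛ, ← Matrix.trace_eq_sum_roots_charpoly (A := Bc), htrc]
  have htraceR : Matrix.trace B = (Λ.map Complex.re).sum := by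
    rw [← re_msum, ← htrace, Complex.ofReal_re]
  -- sum of squares of eigenvalues
  have hBc2 : Bc * Bc = (B * B).map (Complex.ofReal ·) := by
    ext i j
    simp only [hBc, Matrix.mul_apply, Matrix.map_apply]
    push_cast
    rfl
  have hsq : (Λ.map (fun z => z ^ 2)).sum = ((Matrix.trace (B * B) : ℝ) : ℂ) := by
    rw [hΛ, key, hBc2]
    simp only [Matrix.trace, Matrix.diag, Matrix.map_apply]
    push_cast
    rfl
  have hQ : (Λ.map (fun z => z.re ^ 2)).sum = Matrix.trace (B * B) + h := by
    rw [resq_msum, hsq, Complex.ofReal_re, hh]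
  -- trace (B*B) in entries
  set S : ℝ := ∑ i, (B i i) ^ 2 with hS
  set Pd : ℝ := ∑ i, ∑ j ∈ Finset.univ.filter (fun j => i < j), B i i * B j j with hPd
  have htrBB : Matrix.trace (B * B) = S + χoff := by
    have e1 : Matrix.trace (B * B) = ∑ i, ∑ j, B i j * B j i := by
      simp [Matrix.trace, Matrix.mul_apply, Matrix.diag]
    rw [e1, sum_pairs n (fun i j => B i j * B j i), hχ, hS]
    rw [Finset.mul_sum]
    congr 1
    · apply Finset.sum_congr rfl; intro i _; ring
    · apply Finset.sum_congr rfl; intro i _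
      rw [Finset.mul_sum]
      apply Finset.sum_congr rfl; intro j _; ring
  have htrsq : Matrix.trace B ^ 2 = S + 2 * Pd := by
    have e1 : Matrix.trace B ^ 2 = ∑ i, ∑ j, B i i * B j j := by
      rw [Matrix.trace]; rw [sq, Finset.sum_mul_sum]
      rfl
    rw [e1, sum_pairs n (fun i j => B i i * B j j), hS, hPd]
    rw [Finset.mul_sum]
    congr 1
    · apply Finset.sum_congr rfl; intro i _; ring
    · apply Finset.sum_congr rfl; intro i _
      rw [Finset.mul_sum]
      apply Finset.sum_congr rfl; intro j _; ring
  -- the real parts multiset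
  set R : Multiset ℝ := Λ.map Complex.re with hR
  have hRcard : (Multiset.card R : ℝ) = n := by rw [hR, Multiset.card_map, hcard']
  have hRsum : R.sum = Matrix.trace B := htraceR.symm
  set μ : ℝ := Matrix.trace B / n with hμ
  have hRsq : (R.map (fun x => x ^ 2)).sum = S + χoff + h := by
    rw [hR, Multiset.map_map, Function.comp_def, hQ, htrBB]
  have hVeq : Fdiag + χoff + h = (R.map (fun x => (x - μ) ^ 2)).sum := by
    rw [msum_shift, hRsq, hRcard, hRsum, hF, hμ]
    field_simp
    ring_nf
    linear_combination htrsq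
  set V : ℝ := Fdiag + χoff + h with hV
  have hV0 : 0 ≤ V := by
    rw [hVeq]
    apply Multiset.sum_nonneg
    intro x hx
    obtain ⟨y, _, rfl⟩ := Multiset.mem_map.1 hx
    positivity
  -- samuelson
  have hRne : R ≠ 0 := by
    intro hcon
    have hc2 : Multiset.card R = 0 := by rw [hcon]; simp
    rw [hR, Multiset.card_map, hcard'] at hc2
    omega
  obtain ⟨a, haR, hamu, hsam⟩ := samuelson R hRne
  rw [hRsum, hRcard] at hsam hamu
  rw [← hμ] at hsam hamu
  have hsam' : V ≤ ((n:ℝ) * ((n:ℝ) - 1)) * (a - μ) ^ 2 := by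
    rw [hVeq]; exact hsam
  -- sqrt manipulation
  set c : ℝ := Real.sqrt n * Real.sqrt ((n:ℝ) - 1) with hc
  have hc0 : 0 < c := by
    rw [hc]
    apply mul_pos (Real.sqrt_pos.2 hnR) (Real.sqrt_pos.2 (by linarith))
  have hcsq : c = Real.sqrt ((n:ℝ) * ((n:ℝ) - 1)) := by
    rw [hc, ← Real.sqrt_mul (le_of_lt hnR)]
  have hsqrt : Real.sqrt V ≤ c * (a - μ) := by
    calc Real.sqrt V ≤ Real.sqrt (((n:ℝ) * ((n:ℝ) - 1)) * (a - μ) ^ 2) := Real.sqrt_le_sqrt hsam'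
      _ = Real.sqrt ((n:ℝ) * ((n:ℝ) - 1)) * Real.sqrt ((a - μ) ^ 2) := by
          rw [Real.sqrt_mul (by positivity)]
      _ = c * (a - μ) := by
          rw [← hcsq, Real.sqrt_sq (by linarith)]
  have hfin : 1 / c * Real.sqrt V ≤ a - μ := by
    rw [div_mul_eq_mul_div, one_mul, div_le_iff₀ hc0]
    linarith [hsqrt]
  have : 0 < a := by
    calc (0:ℝ) < μ + 1 / c * Real.sqrt V := hpos
      _ ≤ μ + (a - μ) := by linarith
      _ = a := by ring
  obtain ⟨lam0, hlam0, hre⟩ := Multiset.mem_map.1 haR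
  exact ⟨lam0, hlam0, by rw [hre]; exact this⟩
end

section
/- Let m ≥ 3 be odd and let s be a real number with 4m²/(m²−1) ≤ s ≤ 2m. Then there exist m×m doubly stochastic real matrices W1 and W2 with tr(W1·W2) = 0 and ‖W1‖² + ‖W2‖² = s. (Thus for odd m, the minimum of the symmetric correlation C at fixed interdependence diversity S is 0 for all −2m ≤ S ≤ −4m²/(m²−1).) -/
open Finset Matrix

/-- An `m × m` real matrix is doubly stochastic if its entries are nonnegative and
all its rows and columns sum to 1. -/
def IsDoublyStochastic {m : ℕ} (W : Matrix (Fin m) (Fin m) ℝ) : Prop :=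
  (∀ k l, 0 ≤ W k l) ∧ (∀ k, ∑ l, W k l = 1) ∧ (∀ l, ∑ k, W k l = 1)

/-- For odd `m ≥ 3` and every `4m²/(m²−1) ≤ s ≤ 2m`, there exist doubly stochastic
`W1, W2` with `tr(W1·W2) = 0` and `‖W1‖² + ‖W2‖² = s`: the minimum of the symmetric
correlation at fixed interdependence diversity `S = −s` is 0. -/
theorem min_symmetric_correlation_zero_odd (m : ℕ) (hm : 3 ≤ m) (hmo : Odd m)
    (s : ℝ) (hs : 4 * (m : ℝ) ^ 2 / ((m : ℝ) ^ 2 - 1) ≤ s) (hs2m : s ≤ 2 * m) :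
    ∃ W1 W2 : Matrix (Fin m) (Fin m) ℝ,
      IsDoublyStochastic W1 ∧ IsDoublyStochastic W2 ∧
      Matrix.trace (W1 * W2) = 0 ∧
      (∑ k, ∑ l, (W1 k l) ^ 2) + (∑ k, ∑ l, (W2 k l) ^ 2) = s := by
  obtain ⟨n, rfl⟩ := hmo
  have hn1 : 1 ≤ n := by omega
  set m := 2 * n + 1 with hmdef
  have hm0 : 0 < m := by omega
  have hAsub : ∀ a ∈ Finset.Icc 1 n, a < m := by intro a ha; simp at ha; omega
  have hBsub : ∀ a ∈ Finset.Icc 0 n, a < m := by intro a ha; simp at ha; omega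
  set A : Finset (Fin m) := (Finset.Icc 1 n).attachFin hAsub with hA
  set B : Finset (Fin m) := (Finset.Icc 0 n).attachFin hBsub with hB
  haveI : NeZero m := ⟨by omega⟩
  have hAcard : A.card = n := by
    rw [hA, Finset.card_attachFin, Nat.card_Icc]; omega
  have hBcard : B.card = n + 1 := by
    rw [hB, Finset.card_attachFin, Nat.card_Icc]; omega
  set a1 : Fin m := ⟨1, by omega⟩ with ha1
  set b0 : Fin m := ⟨0, by omega⟩ with hb0
  have ha1A : a1 ∈ A := by simp [hA, Finset.mem_attachFin, ha1]; omega
  have hb0B : b0 ∈ B := by simp [hB, Finset.mem_attachFin, hb0]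
  have hnR : (0:ℝ) < n := by exact_mod_cast hn1
  have hnR1 : (0:ℝ) < (n:ℝ) + 1 := by positivity
  -- weight functions
  set f : ℝ → Fin m → ℝ := fun t x =>
    if x ∈ A then ((1-t)/n + if x = a1 then t else 0) else 0 with hf
  set g : ℝ → Fin m → ℝ := fun t x =>
    if x ∈ B then ((1-t)/(n+1) + if x = b0 then t else 0) else 0 with hg
  -- the value function
  set F : ℝ → ℝ := fun t =>
    (m:ℝ) * ((((1-t)/n + t)^2 + ((n:ℝ)-1)*((1-t)/n)^2)
      + (((1-t)/(n+1) + t)^2 + (n:ℝ)*((1-t)/(n+1))^2)) with hF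
  have hmR : (m:ℝ) = 2*(n:ℝ)+1 := by push_cast [hmdef]; ring
  have hF0 : F 0 = 4 * (m : ℝ) ^ 2 / ((m : ℝ) ^ 2 - 1) := by
    have hne : ((m:ℝ)^2 - 1) ≠ 0 := by rw [hmR]; nlinarith
    rw [hF]
    simp only
    rw [eq_div_iff hne, hmR]
    field_simp
    ring
  have hF1 : F 1 = 2 * m := by
    rw [hF]; simp only; field_simp; ring
  have hFc : ContinuousOn F (Set.Icc 0 1) := by
    apply Continuous.continuousOn
    rw [hF]; fun_prop (disch := positivity)
  have hmem : s ∈ Set.Icc (F 0) (F 1) := by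
    rw [hF0, hF1]; exact ⟨hs, hs2m⟩
  obtain ⟨t, ht01, hts⟩ := intermediate_value_Icc (by norm_num : (0:ℝ) ≤ 1) hFc hmem
  obtain ⟨ht0, ht1⟩ := ht01
  -- sums of f and g
  have hfsum : ∑ x, f t x = 1 := by
    rw [hf]; simp only
    rw [← Finset.sum_filter_add_sum_filter_not Finset.univ (· ∈ A)]
    have h2 : ∑ x ∈ Finset.univ.filter (· ∉ A), (if x ∈ A then ((1-t)/n + if x = a1 then t else 0) else 0) = 0 := by
      apply Finset.sum_eq_zero; intro x hx; simp at hx; simp [hx]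
    rw [h2, add_zero]
    have h1 : Finset.univ.filter (· ∈ A) = A := by ext x; simp
    rw [h1]
    have : ∀ x ∈ A, (if x ∈ A then ((1-t)/n + if x = a1 then t else 0) else 0)
        = (1-t)/n + (if x = a1 then t else 0) := by intro x hx; simp [hx]
    rw [Finset.sum_congr rfl this, Finset.sum_add_distrib, Finset.sum_const,
      Finset.sum_ite_eq' A a1 (fun _ => t), if_pos ha1A, hAcard]
    rw [nsmul_eq_mul, mul_div_assoc', mul_div_cancel_left₀ _ hnR.ne']; ring
  have hgsum : ∑ x, g t x = 1 := by
    rw [hg]; simp only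
    rw [← Finset.sum_filter_add_sum_filter_not Finset.univ (· ∈ B)]
    have h2 : ∑ x ∈ Finset.univ.filter (· ∉ B), (if x ∈ B then ((1-t)/(n+1) + if x = b0 then t else 0) else 0) = 0 := by
      apply Finset.sum_eq_zero; intro x hx; simp at hx; simp [hx]
    rw [h2, add_zero]
    have h1 : Finset.univ.filter (· ∈ B) = B := by ext x; simp
    rw [h1]
    have : ∀ x ∈ B, (if x ∈ B then ((1-t)/(n+1) + if x = b0 then t else 0) else 0)
        = (1-t)/(n+1) + (if x = b0 then t else 0) := by intro x hx; simp [hx]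
    rw [Finset.sum_congr rfl this, Finset.sum_add_distrib, Finset.sum_const,
      Finset.sum_ite_eq' B b0 (fun _ => t), if_pos hb0B, hBcard]
    rw [nsmul_eq_mul]
    push_cast
    rw [mul_div_assoc', mul_div_cancel_left₀ _ hnR1.ne']; ring
  have hfnn : ∀ x, 0 ≤ f t x := by
    intro x; rw [hf]; simp only
    have h1 : (0:ℝ) ≤ (1-t)/n := by
      apply div_nonneg (by linarith) (le_of_lt hnR)
    split <;> [skip; rfl]
    split <;> linarith
  have hgnn : ∀ x, 0 ≤ g t x := by
    intro x; rw [hg]; simp only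
    have h1 : (0:ℝ) ≤ (1-t)/(n+1) := by
      apply div_nonneg (by linarith) (le_of_lt hnR1)
    split <;> [skip; rfl]
    split <;> linarith
  -- squared sums
  have hfsq : ∑ x, (f t x)^2 = ((1-t)/n + t)^2 + ((n:ℝ)-1)*((1-t)/n)^2 := by
    rw [hf]; simp only
    rw [← Finset.sum_filter_add_sum_filter_not Finset.univ (· ∈ A)]
    have h2 : ∑ x ∈ Finset.univ.filter (· ∉ A), (if x ∈ A then ((1-t)/n + if x = a1 then t else 0) else 0)^2 = 0 := by
      apply Finset.sum_eq_zero; intro x hx; simp at hx; simp [hx]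
    rw [h2, add_zero]
    have h1 : Finset.univ.filter (· ∈ A) = A := by ext x; simp
    rw [h1]
    have : ∀ x ∈ A, (if x ∈ A then ((1-t)/n + if x = a1 then t else 0) else 0)^2
        = ((1-t)/n)^2 + (if x = a1 then (((1-t)/n + t)^2 - ((1-t)/n)^2) else 0) := by
      intro x hx; simp only [if_pos hx]; split <;> ring
    rw [Finset.sum_congr rfl this, Finset.sum_add_distrib, Finset.sum_const,
      Finset.sum_ite_eq' A a1, if_pos ha1A, hAcard, nsmul_eq_mul]
    push_cast
    ring
  have hgsq : ∑ x, (g t x)^2 = ((1-t)/(n+1) + t)^2 + (n:ℝ)*((1-t)/(n+1))^2 := by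
    rw [hg]; simp only
    rw [← Finset.sum_filter_add_sum_filter_not Finset.univ (· ∈ B)]
    have h2 : ∑ x ∈ Finset.univ.filter (· ∉ B), (if x ∈ B then ((1-t)/(n+1) + if x = b0 then t else 0) else 0)^2 = 0 := by
      apply Finset.sum_eq_zero; intro x hx; simp at hx; simp [hx]
    rw [h2, add_zero]
    have h1 : Finset.univ.filter (· ∈ B) = B := by ext x; simp
    rw [h1]
    have : ∀ x ∈ B, (if x ∈ B then ((1-t)/(n+1) + if x = b0 then t else 0) else 0)^2
        = ((1-t)/(n+1))^2 + (if x = b0 then (((1-t)/(n+1) + t)^2 - ((1-t)/(n+1))^2) else 0) := by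
      intro x hx; simp only [if_pos hx]; split <;> ring
    rw [Finset.sum_congr rfl this, Finset.sum_add_distrib, Finset.sum_const,
      Finset.sum_ite_eq' B b0, if_pos hb0B, hBcard, nsmul_eq_mul]
    push_cast
    ring
  -- the matrices
  refine ⟨Matrix.circulant (f t), Matrix.circulant (g t), ?_, ?_, ?_, ?_⟩
  · refine ⟨fun k l => hfnn _, fun k => ?_, fun l => ?_⟩
    · rw [← hfsum]
      exact Fintype.sum_equiv (Equiv.subLeft k) _ _ (fun l => rfl)
    · rw [← hfsum]
      exact Fintype.sum_equiv (Equiv.subRight l) _ _ (fun k => rfl)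
  · refine ⟨fun k l => hgnn _, fun k => ?_, fun l => ?_⟩
    · rw [← hgsum]
      exact Fintype.sum_equiv (Equiv.subLeft k) _ _ (fun l => rfl)
    · rw [← hgsum]
      exact Fintype.sum_equiv (Equiv.subRight l) _ _ (fun k => rfl)
  · rw [Matrix.trace]
    apply Finset.sum_eq_zero
    intro k _
    rw [Matrix.diag_apply, Matrix.mul_apply]
    apply Finset.sum_eq_zero
    intro l _
    rw [Matrix.circulant_apply, Matrix.circulant_apply]
    rcases eq_or_ne (f t (k - l)) 0 with h | h
    · rw [h, zero_mul]
    · have hkA : k - l ∈ A := by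
        by_contra hc
        apply h
        rw [hf]; simp [hc]
      have hd1 : 1 ≤ (k - l).val ∧ (k - l).val ≤ n := by
        rw [hA, Finset.mem_attachFin, Finset.mem_Icc] at hkA
        exact hkA
      have hvn : (-(k - l)).val = m - (k - l).val := by
        simp only [Fin.neg_def]
        exact Nat.mod_eq_of_lt (by omega)
      have : l - k ∉ B := by
        have hlk : l - k = -(k - l) := by exact (neg_sub k l).symm
        rw [hlk, hB, Finset.mem_attachFin, Finset.mem_Icc, hvn]
        omega
      rw [hg]; simp [this]
  · have e1 : ∀ k : Fin m, ∑ l, (Matrix.circulant (f t) k l)^2 = ∑ x, (f t x)^2 :=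
      fun k => Fintype.sum_equiv (Equiv.subLeft k) _ _ (fun l => rfl)
    have e2 : ∀ k : Fin m, ∑ l, (Matrix.circulant (g t) k l)^2 = ∑ x, (g t x)^2 :=
      fun k => Fintype.sum_equiv (Equiv.subLeft k) _ _ (fun l => rfl)
    simp only [e1, e2, Finset.sum_const, Finset.card_univ, Fintype.card_fin, nsmul_eq_mul]
    rw [hfsq, hgsq, ← hts, hF]
    ring
end

section
/- Let m ≥ 1 be odd and let W1, W2 be m×m doubly stochastic real matrices such that (W1)_{kl} + (W2)_{lk} = 2/m for all indices k, l. Then ‖W1‖² + ‖W2‖² ≤ (4m−2)/m. (Equivalently, for odd m the interdependence diversity along the solution family W1 = (2/m)·J − W2ᵀ satisfies S ≥ −2(2m−1)/m.) -/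
open Finset Matrix

lemma key_row (m : ℕ) (hmo : Odd m) (t : Fin m → ℝ)
    (h0 : ∀ l, 0 ≤ t l) (h2 : ∀ l, t l ≤ 2) (hs : ∑ l, t l = m) :
    (1:ℝ) ≤ ∑ l, t l * (2 - t l) := by
  classical
  set A : Finset (Fin m) := Finset.univ.filter (fun l => t l ≤ 1) with hA
  have hsplit : ∑ l ∈ A, t l + ∑ l ∈ Aᶜ, t l = m := by
    rw [Finset.sum_add_sum_compl]; exact hs
  have hAc_le : ∑ l ∈ Aᶜ, t l ≤ 2 * Aᶜ.card := by
    calc ∑ l ∈ Aᶜ, t l ≤ ∑ _l ∈ Aᶜ, (2:ℝ) := Finset.sum_le_sum (fun l _ => h2 l)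
    _ = 2 * Aᶜ.card := by rw [Finset.sum_const]; ring
  have hA_nonneg : (0:ℝ) ≤ ∑ l ∈ A, t l := Finset.sum_nonneg (fun l _ => h0 l)
  have hAc_nonneg : (0:ℝ) ≤ ∑ l ∈ Aᶜ, t l := Finset.sum_nonneg (fun l _ => h0 l)
  have hfnn : ∀ l, (0:ℝ) ≤ t l * (2 - t l) :=
    fun l => mul_nonneg (h0 l) (by linarith [h2 l])
  have hne : 2 * Aᶜ.card ≠ m := by
    rcases hmo with ⟨k, hk⟩; omega
  rcases lt_or_gt_of_ne hne with hlt | hgt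
  · -- 2c < m, use part over A
    have hcard : (2:ℝ) * Aᶜ.card + 1 ≤ m := by
      have : 2 * Aᶜ.card + 1 ≤ m := by omega
      exact_mod_cast this
    have h1le : (1:ℝ) ≤ ∑ l ∈ A, t l := by linarith
    have step1 : ∑ l ∈ A, t l ≤ ∑ l ∈ A, t l * (2 - t l) := by
      refine Finset.sum_le_sum (fun l hl => ?_)
      have htl : t l ≤ 1 := by
        simp only [hA, Finset.mem_filter] at hl; exact hl.2
      nlinarith [h0 l]
    have step2 : ∑ l ∈ A, t l * (2 - t l) ≤ ∑ l, t l * (2 - t l) :=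
      Finset.sum_le_sum_of_subset_of_nonneg (Finset.subset_univ A)
        (fun l _ _ => hfnn l)
    linarith
  · -- 2c > m, use part over Aᶜ
    have hcard : (m:ℝ) + 1 ≤ 2 * Aᶜ.card := by
      have : m + 1 ≤ 2 * Aᶜ.card := by omega
      exact_mod_cast this
    have step1 : ∑ l ∈ Aᶜ, (2 - t l) ≤ ∑ l ∈ Aᶜ, t l * (2 - t l) := by
      refine Finset.sum_le_sum (fun l hl => ?_)
      have htl : 1 < t l := by
        simp only [hA, Finset.mem_compl, Finset.mem_filter] at hl
        by_contra h; exact hl ⟨Finset.mem_univ l, by linarith⟩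
      nlinarith [h2 l]
    have hsum : ∑ l ∈ Aᶜ, (2 - t l) = 2 * Aᶜ.card - ∑ l ∈ Aᶜ, t l := by
      rw [Finset.sum_sub_distrib, Finset.sum_const]; ring
    have step2 : ∑ l ∈ Aᶜ, t l * (2 - t l) ≤ ∑ l, t l * (2 - t l) :=
      Finset.sum_le_sum_of_subset_of_nonneg (Finset.subset_univ Aᶜ)
        (fun l _ _ => hfnn l)
    linarith

lemma row_bound (m : ℕ) (hm : 1 ≤ m) (hmo : Odd m) (x : Fin m → ℝ)
    (h0 : ∀ l, 0 ≤ x l) (h2 : ∀ l, x l ≤ 2 / m) (hs : ∑ l, x l = 1) :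
    ∑ l, ((x l) ^ 2 + (2 / m - x l) ^ 2) ≤ (4 * m - 2) / (m:ℝ) ^ 2 := by
  have hmpos : (0:ℝ) < m := by exact_mod_cast hm
  have key : (1:ℝ) ≤ ∑ l, ((m:ℝ) * x l) * (2 - (m:ℝ) * x l) := by
    refine key_row m hmo (fun l => (m:ℝ) * x l)
      (fun l => mul_nonneg hmpos.le (h0 l)) (fun l => ?_) ?_
    · show (m:ℝ) * x l ≤ 2
      have h := h2 l
      rw [le_div_iff₀ hmpos] at h
      nlinarith
    · show ∑ l, (m:ℝ) * x l = m
      rw [← Finset.mul_sum, hs, mul_one]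
  have hexp : ∀ l, (x l) ^ 2 + (2 / (m:ℝ) - x l) ^ 2
      = 4 / (m:ℝ) ^ 2 - 2 / (m:ℝ) ^ 2 * (((m:ℝ) * x l) * (2 - (m:ℝ) * x l)) := by
    intro l
    field_simp
    ring
  have hfin : ∑ l, ((x l) ^ 2 + (2 / (m:ℝ) - x l) ^ 2)
      = (m:ℝ) * (4 / (m:ℝ) ^ 2) - 2 / (m:ℝ) ^ 2 * ∑ l, ((m:ℝ) * x l) * (2 - (m:ℝ) * x l) := by
    simp only [hexp]
    rw [Finset.sum_sub_distrib, Finset.sum_const, ← Finset.mul_sum,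
      Finset.card_univ, Fintype.card_fin, nsmul_eq_mul]
  rw [hfin]
  have hmul : 2 / (m:ℝ) ^ 2 * 1 ≤ 2 / (m:ℝ) ^ 2 * ∑ l, ((m:ℝ) * x l) * (2 - (m:ℝ) * x l) :=
    mul_le_mul_of_nonneg_left key (by positivity)
  have hid : (m:ℝ) * (4 / (m:ℝ) ^ 2) - 2 / (m:ℝ) ^ 2 * 1 = (4 * m - 2) / (m:ℝ) ^ 2 := by
    field_simp
  linarith

/-- For odd `m`, if doubly stochastic `W1, W2` satisfy `(W1)_{kl} + (W2)_{lk} = 2/m`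
for all `k, l`, then `‖W1‖² + ‖W2‖² ≤ (4m−2)/m`; equivalently, along the family
`W1 = (2/m)·J − W2ᵀ` the interdependence diversity satisfies `S ≥ −2(2m−1)/m`. -/
theorem sq_sum_le_of_odd_complementary (m : ℕ) (hm : 1 ≤ m) (hmo : Odd m)
    (W1 W2 : Matrix (Fin m) (Fin m) ℝ)
    (h1 : IsDoublyStochastic W1) (h2 : IsDoublyStochastic W2)
    (hcomp : ∀ k l, W1 k l + W2 l k = 2 / m) :
    (∑ k, ∑ l, (W1 k l) ^ 2) + (∑ k, ∑ l, (W2 k l) ^ 2) ≤ (4 * m - 2) / m := by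
  have hmpos : (0:ℝ) < m := by exact_mod_cast hm
  obtain ⟨h1nn, h1row, h1col⟩ := h1
  obtain ⟨h2nn, h2row, h2col⟩ := h2
  have hW2 : ∀ k l, W2 k l = 2 / m - W1 l k := fun k l => by
    have := hcomp l k; linarith
  have hswap : (∑ k, ∑ l, (W2 k l) ^ 2) = ∑ k, ∑ l, (2 / m - W1 k l) ^ 2 := by
    rw [Finset.sum_comm]
    exact Finset.sum_congr rfl (fun k _ => Finset.sum_congr rfl
      (fun l _ => by rw [hW2 l k]))
  rw [hswap, ← Finset.sum_add_distrib]
  have hrow : ∀ k, (∑ l, (W1 k l) ^ 2) + (∑ l, (2 / m - W1 k l) ^ 2)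
      ≤ (4 * m - 2) / (m:ℝ) ^ 2 := by
    intro k
    rw [← Finset.sum_add_distrib]
    apply row_bound m hm hmo (W1 k) (fun l => h1nn k l)
      (fun l => by
        have hnn := h2nn l k
        rw [hW2 l k] at hnn
        linarith)
      (h1row k)
  calc ∑ k, ((∑ l, (W1 k l) ^ 2) + (∑ l, (2 / m - W1 k l) ^ 2))
      ≤ ∑ _k : Fin m, ((4:ℝ) * m - 2) / (m:ℝ) ^ 2 := Finset.sum_le_sum (fun k _ => hrow k)
    _ = (4 * m - 2) / m := by
        rw [Finset.sum_const, Finset.card_univ, Fintype.card_fin, nsmul_eq_mul]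
        field_simp
end
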